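/- arXiv:1704.01234 — 4 statements merged into one kernel-verified Lean document; each statement's English description precedes it below -/
import Mathlib

section
/- A Dirichlet series f(s) = \sum_{k=1}^\infty a_k k^{-s} with a_1 \neq 0 has finite abscissa of convergence if and only if the formal inverse Dirichlet series \sum_{k=1}^\infty \mu_f(k) k^{-s} has finite abscissa of convergence, where \mu_f is the Dirichlet-convolution inverse of (a_k). -/
open Finset Filter Topology

private lemma sum_inv_sq_le_three (s : Finset ℕ) :
    ∑ d ∈ s, ((d:ℝ)^2)⁻¹ ≤ 3 := by
  have h := hasSum_zeta_two
  have h1 : ∑ d ∈ s, (1:ℝ) / (d:ℝ)^2 ≤ Real.pi ^ 2 / 6 :=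
    sum_le_hasSum s (fun i _ => by positivity) h
  have h2 : Real.pi ^ 2 / 6 ≤ 3 := by nlinarith [Real.pi_le_four, Real.pi_pos]
  calc ∑ d ∈ s, ((d:ℝ)^2)⁻¹ = ∑ d ∈ s, (1:ℝ)/(d:ℝ)^2 := by simp [one_div]
    _ ≤ 3 := h1.trans h2

private lemma poly_bound_of_conv (f : ℕ → ℂ) (s L : ℂ)
    (h : Tendsto (fun n => ∑ k ∈ Finset.Icc 1 n, f k * (k : ℂ) ^ (-s)) atTop (𝓝 L)) :
    ∃ C : ℝ, 0 ≤ C ∧ ∃ M : ℕ, ∀ k, 1 ≤ k → ‖f k‖ ≤ C * (k:ℝ)^M := by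
  set T : ℕ → ℂ := fun k => f k * (k:ℂ) ^ (-s) with hT
  have hterm : Tendsto (fun n : ℕ => T (n+1)) atTop (𝓝 0) := by
    have h1 := (h.comp (tendsto_add_atTop_nat 1)).sub h
    rw [sub_self] at h1
    refine h1.congr fun n => ?_
    simp only [Function.comp]
    rw [Finset.sum_Icc_succ_top (by omega : 1 ≤ n + 1)]
    ring
  have hev : ∀ᶠ n in atTop, ‖T (n+1)‖ < 1 := by
    have := hterm.norm
    simp only [norm_zero] at this
    exact this.eventually_lt_const one_pos |>.mono (fun n hn => hn)
  obtain ⟨K, hK⟩ := eventually_atTop.mp hev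
  set C : ℝ := (∑ j ∈ Finset.range (K+1), ‖T (j+1)‖) + 1 with hC
  have hCnonneg : 0 ≤ C := by positivity
  have hTC : ∀ n : ℕ, ‖T (n+1)‖ ≤ C := by
    intro n
    rcases le_or_gt K n with hn | hn
    · have := hK n hn
      have hsum : (0:ℝ) ≤ ∑ j ∈ Finset.range (K+1), ‖T (j+1)‖ := by positivity
      linarith
    · have hmem : n ∈ Finset.range (K+1) := Finset.mem_range.mpr (by omega)
      have := Finset.single_le_sum (f := fun j => ‖T (j+1)‖)
        (fun j _ => by positivity) hmem
      simp only [hC]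
      linarith
  refine ⟨C, hCnonneg, ⌈s.re⌉₊, fun k hk => ?_⟩
  have hk0 : (0:ℝ) < k := by exact_mod_cast hk
  have habs : ‖(k:ℂ) ^ (-s)‖ = (k:ℝ) ^ (-s.re) := by
    rw [show ((k:ℂ)) = (((k:ℝ)):ℂ) by push_cast; ring,
      Complex.norm_cpow_eq_rpow_re_of_pos hk0]
    simp
  have hTk : ‖f k‖ * (k:ℝ) ^ (-s.re) ≤ C := by
    have := hTC (k-1)
    rw [show k - 1 + 1 = k by omega, hT] at this
    simpa [norm_mul, habs] using this
  have hmul : ‖f k‖ ≤ C * (k:ℝ) ^ (s.re) := by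
    have hpow : (0:ℝ) < (k:ℝ) ^ (-s.re) := Real.rpow_pos_of_pos hk0 _
    have h2 : ‖f k‖ * ((k:ℝ) ^ (-s.re) * (k:ℝ) ^ (s.re)) ≤ C * (k:ℝ) ^ (s.re) := by
      rw [← mul_assoc]
      exact mul_le_mul_of_nonneg_right hTk (Real.rpow_nonneg hk0.le _)
    rwa [← Real.rpow_add hk0, neg_add_cancel, Real.rpow_zero, mul_one] at h2
  refine hmul.trans ?_
  have h3 : (k:ℝ) ^ (s.re) ≤ (k:ℝ) ^ ((⌈s.re⌉₊ : ℝ)) :=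
    Real.rpow_le_rpow_of_exponent_le (by exact_mod_cast hk) (Nat.le_ceil _)
  rw [Real.rpow_natCast] at h3
  exact mul_le_mul_of_nonneg_left h3 hCnonneg

private lemma conv_of_poly_bound (f : ℕ → ℂ) (hf0 : f 0 = 0) (C : ℝ) (M : ℕ)
    (hb : ∀ k, 1 ≤ k → ‖f k‖ ≤ C * (k:ℝ)^M) :
    ∃ s L : ℂ, Tendsto (fun n => ∑ k ∈ Finset.Icc 1 n, f k * (k : ℂ) ^ (-s)) atTop (𝓝 L) := by
  refine ⟨((M:ℂ)+2), ?_⟩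
  set g : ℕ → ℂ := fun k => f k * (k:ℂ) ^ (-((M:ℂ)+2)) with hg
  have hsummable : Summable g := by
    refine Summable.of_norm_bounded
      ((Real.summable_nat_pow_inv.mpr one_lt_two).mul_left C) ?_
    intro k
    rcases Nat.eq_zero_or_pos k with rfl | hk
    · simp [hg, hf0]
    · have hk0 : (0:ℝ) < k := by exact_mod_cast hk
      have h1 : ‖(k:ℂ) ^ (-((M:ℂ)+2))‖ = (k:ℝ) ^ (-((M:ℝ)+2)) := by
        rw [show ((k:ℂ)) = (((k:ℝ)):ℂ) by push_cast; ring,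
          Complex.norm_cpow_eq_rpow_re_of_pos hk0]
        norm_num
      have h2 : (k:ℝ) ^ (-((M:ℝ)+2)) = ((k:ℝ)^M)⁻¹ * ((k:ℝ)^2)⁻¹ := by
        rw [Real.rpow_neg hk0.le, show ((M:ℝ)+2) = ((M+2:ℕ):ℝ) by push_cast; ring,
          Real.rpow_natCast, pow_add, mul_inv]
      have hkM : (0:ℝ) < (k:ℝ)^M := by positivity
      calc ‖g k‖ = ‖f k‖ * ((k:ℝ) ^ (-((M:ℝ)+2))) := by
            rw [hg]; simp only [norm_mul, h1]
        _ = ‖f k‖ * (((k:ℝ)^M)⁻¹ * ((k:ℝ)^2)⁻¹) := by rw [h2]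
        _ ≤ (C * (k:ℝ)^M) * (((k:ℝ)^M)⁻¹ * ((k:ℝ)^2)⁻¹) := by
            have := hb k hk
            gcongr
        _ = C * ((k:ℝ)^2)⁻¹ := by field_simp
  refine ⟨∑' k, g k, ?_⟩
  have h3 := hsummable.hasSum.tendsto_sum_nat
  have h4 : ∀ n, ∑ k ∈ Finset.Icc 1 n, g k = ∑ k ∈ Finset.range (n+1), g k := by
    intro n
    have : Finset.range (n+1) = insert 0 (Finset.Icc 1 n) := by
      ext x; simp [Finset.mem_range, Finset.mem_Icc]; omega
    rw [this, Finset.sum_insert (by simp), show g 0 = 0 by simp [hg, hf0], zero_add]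
  have h5 := h3.comp (tendsto_add_atTop_nat 1)
  refine h5.congr fun n => ?_
  simp only [Function.comp]
  exact (h4 n).symm

private lemma mu_poly_bound (a μ : ℕ → ℂ) (ha1 : a 1 ≠ 0)
    (hμ : ∀ k : ℕ, 1 ≤ k →
      (∑ d ∈ k.divisors, a d * μ (k / d)) = if k = 1 then 1 else 0)
    (C : ℝ) (M : ℕ) (hb : ∀ k, 1 ≤ k → ‖a k‖ ≤ C * (k:ℝ)^M) :
    ∃ C' : ℝ, 0 ≤ C' ∧ ∃ M' : ℕ, ∀ k, 1 ≤ k → ‖μ k‖ ≤ C' * (k:ℝ)^M' := by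
  set A := ‖a 1‖ with hA
  have hApos : 0 < A := by simpa [hA] using ha1
  have hCpos : 0 < C := by
    have := hb 1 le_rfl
    simp only [Nat.cast_one, one_pow, mul_one] at this
    exact lt_of_lt_of_le hApos this
  obtain ⟨N, hN⟩ := pow_unbounded_of_one_lt (3*C/A) (by norm_num : (1:ℝ) < 2)
  have h2N : (0:ℝ) < 2^N := by positivity
  have hfrac : 3 * C * A⁻¹ * ((2:ℝ)^N)⁻¹ ≤ 1 := by
    rw [div_lt_iff₀ hApos] at hN
    have : 3 * C * A⁻¹ * ((2:ℝ)^N)⁻¹ = (3*C) / (2^N * A) := by field_simp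
    rw [this, div_le_one (by positivity)]
    linarith
  have hμ1 : μ 1 = (a 1)⁻¹ := by
    have h := hμ 1 le_rfl
    simp [Nat.divisors_one] at h
    exact eq_inv_of_mul_eq_one_right h
  refine ⟨A⁻¹, inv_nonneg.mpr hApos.le, M + N + 2, ?_⟩
  intro k
  induction k using Nat.strong_induction_on with
  | _ k ih =>
    intro hk
    rcases eq_or_lt_of_le hk with h1 | h2
    · rw [← h1]
      simp [hμ1, norm_inv, ← hA]
    · have hk0 : 0 < k := hk
      have hkne : k ≠ 1 := by omega
      have hsum := hμ k hk
      rw [if_neg hkne] at hsum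
      have h1mem : (1:ℕ) ∈ k.divisors := Nat.one_mem_divisors.mpr (by omega)
      rw [← Finset.add_sum_erase _ _ h1mem, Nat.div_one] at hsum
      have key : a 1 * μ k = -∑ d ∈ k.divisors.erase 1, a d * μ (k / d) := by
        linear_combination hsum
      have habs : A * ‖μ k‖
          = ‖∑ d ∈ k.divisors.erase 1, a d * μ (k/d)‖ := by
        rw [hA, ← norm_mul, key, norm_neg]
      set c : ℝ := C * A⁻¹ * (k:ℝ)^(M+N+2) * ((2:ℝ)^N)⁻¹ with hc
      have hcnonneg : 0 ≤ c := by positivity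
      have hsumbound : ‖∑ d ∈ k.divisors.erase 1, a d * μ (k/d)‖
          ≤ 3 * c := by
        calc ‖∑ d ∈ k.divisors.erase 1, a d * μ (k/d)‖
            ≤ ∑ d ∈ k.divisors.erase 1, ‖a d * μ (k/d)‖ :=
              norm_sum_le _ _
          _ ≤ ∑ d ∈ k.divisors.erase 1, c * ((d:ℝ)^2)⁻¹ := by
              apply Finset.sum_le_sum
              intro d hd
              have hdne1 : d ≠ 1 := Finset.ne_of_mem_erase hd
              have hdmem := Finset.mem_of_mem_erase hd
              rw [Nat.mem_divisors] at hdmem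
              obtain ⟨hdvd, -⟩ := hdmem
              have hdpos : 0 < d := Nat.pos_of_dvd_of_pos hdvd hk0
              have hd2 : 2 ≤ d := by omega
              have hdk : d ≤ k := Nat.le_of_dvd hk0 hdvd
              have hq1 : 1 ≤ k / d := (Nat.one_le_div_iff hdpos).mpr hdk
              have hqlt : k / d < k := Nat.div_lt_self hk0 (by omega)
              have hih := ih (k/d) hqlt hq1
              have hcast : ((k/d : ℕ):ℝ) = (k:ℝ)/(d:ℝ) :=
                Nat.cast_div hdvd (by exact_mod_cast hdpos.ne')
              rw [hcast] at hih
              have hd0 : (0:ℝ) < d := by exact_mod_cast hdpos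
              have hd2R : (2:ℝ) ≤ d := by exact_mod_cast hd2
              have hterm1 : ‖a d * μ (k/d)‖
                  ≤ (C * (d:ℝ)^M) * (A⁻¹ * ((k:ℝ)/(d:ℝ))^(M+N+2)) := by
                rw [norm_mul]
                exact mul_le_mul (hb d (by omega)) hih (by positivity) (by positivity)
              refine hterm1.trans ?_
              have heq : (C * (d:ℝ)^M) * (A⁻¹ * ((k:ℝ)/(d:ℝ))^(M+N+2))
                  = (C * A⁻¹ * (k:ℝ)^(M+N+2) * ((d:ℝ)^N)⁻¹) * ((d:ℝ)^2)⁻¹ := by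
                rw [div_pow]
                field_simp
                ring
              rw [heq, hc]
              gcongr
          _ = c * ∑ d ∈ k.divisors.erase 1, ((d:ℝ)^2)⁻¹ := by rw [Finset.mul_sum]
          _ ≤ c * 3 := mul_le_mul_of_nonneg_left (sum_inv_sq_le_three _) hcnonneg
          _ = 3 * c := by ring
      have hfinal : A * ‖μ k‖ ≤ (k:ℝ)^(M+N+2) := by
        rw [habs]
        refine hsumbound.trans ?_
        have : 3 * c = (3 * C * A⁻¹ * ((2:ℝ)^N)⁻¹) * (k:ℝ)^(M+N+2) := by rw [hc]; ring
        rw [this]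
        calc (3 * C * A⁻¹ * ((2:ℝ)^N)⁻¹) * (k:ℝ)^(M+N+2)
            ≤ 1 * (k:ℝ)^(M+N+2) := mul_le_mul_of_nonneg_right hfrac (by positivity)
          _ = (k:ℝ)^(M+N+2) := one_mul _
      rw [inv_mul_eq_div, le_div_iff₀ hApos, mul_comm]
      exact hfinal

theorem finite_abscissa_iff_inverse_finite_abscissa (a : ℕ → ℂ) (ha0 : a 0 = 0)
    (ha1 : a 1 ≠ 0) (μ : ℕ → ℂ) (hμ0 : μ 0 = 0)
    (hμ : ∀ k : ℕ, 1 ≤ k →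
      (∑ d ∈ k.divisors, a d * μ (k / d)) = if k = 1 then 1 else 0) :
    (∃ s : ℂ, ∃ L : ℂ,
        Tendsto (fun n => ∑ k ∈ Finset.Icc 1 n, a k * (k : ℂ) ^ (-s)) atTop (𝓝 L)) ↔
    (∃ s : ℂ, ∃ L : ℂ,
        Tendsto (fun n => ∑ k ∈ Finset.Icc 1 n, μ k * (k : ℂ) ^ (-s)) atTop (𝓝 L)) := by
  have hμ1ne : μ 1 ≠ 0 := by
    have h := hμ 1 le_rfl
    simp [Nat.divisors_one] at h
    intro h0
    rw [h0, mul_zero] at h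
    exact zero_ne_one h
  have hμa : ∀ k : ℕ, 1 ≤ k →
      (∑ d ∈ k.divisors, μ d * a (k / d)) = if k = 1 then 1 else 0 := by
    intro k hk
    rw [← Nat.sum_div_divisors k (fun d => μ d * a (k / d)), ← hμ k hk]
    apply Finset.sum_congr rfl
    intro d hd
    rw [Nat.mem_divisors] at hd
    rw [Nat.div_div_self hd.1 hd.2]
    ring
  constructor
  · rintro ⟨s, L, h⟩
    obtain ⟨C, hC0, M, hb⟩ := poly_bound_of_conv a s L h
    obtain ⟨C', -, M', hb'⟩ := mu_poly_bound a μ ha1 hμ C M hb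
    exact conv_of_poly_bound μ hμ0 C' M' hb'
  · rintro ⟨s, L, h⟩
    obtain ⟨C, hC0, M, hb⟩ := poly_bound_of_conv μ s L h
    obtain ⟨C', -, M', hb'⟩ := mu_poly_bound μ a hμ1ne hμa C M hb
    exact conv_of_poly_bound a ha0 C' M' hb'
end

section
/- Define \psi_1(t) = 1 and \psi_n(t) = n^{1/2 - it} - (n-1)^{1/2 - it} for integers n \ge 2 and real t. Then (1/(2\pi)) \int_{-\infty}^{\infty} \psi_n(t) \overline{\psi_m(t)} \, dt/(1/4 + t^2) = \delta_{nm} for all n, m \in \mathbb{N}. -/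
open MeasureTheory

/-- Lubinsky's Dirichlet orthonormal polynomials:
`ψ₁(t) = 1`, `ψₙ(t) = n^{1/2-it} - (n-1)^{1/2-it}` for `n ≥ 2`. -/
noncomputable def lubinskyPsi (n : ℕ) (t : ℝ) : ℂ :=
  if n ≤ 1 then 1
  else (n : ℂ) ^ ((1/2 : ℂ) - Complex.I * t) - ((n : ℂ) - 1) ^ ((1/2 : ℂ) - Complex.I * t)

open Real Complex FourierTransform Filter Topology

lemma integral_cexp_neg_Ioi' {c : ℂ} (hc : 0 < c.re) :
    ∫ x : ℝ in Set.Ioi 0, Complex.exp (-c * x) = 1 / c := by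
  have hmeas : AEStronglyMeasurable (fun x : ℝ => Complex.exp (-c * x))
      (volume.restrict (Set.Ioi 0)) :=
    (Complex.continuous_exp.comp (by continuity)).aestronglyMeasurable
  have hint : IntegrableOn (fun x : ℝ => Complex.exp (-c * x)) (Set.Ioi 0) := by
    apply (exp_neg_integrableOn_Ioi 0 hc).mono' hmeas
    filter_upwards with x
    simp only [Complex.norm_exp, neg_mul, Complex.neg_re, Complex.mul_re,
      Complex.ofReal_re, Complex.ofReal_im, mul_zero, sub_zero, le_refl]
  have hderiv : ∀ x ∈ Set.Ici (0:ℝ), HasDerivAt (fun x : ℝ => -Complex.exp (-c * x) / c)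
      (Complex.exp (-c * x)) x := by
    intro x _
    have h1 : HasDerivAt (fun x : ℝ => Complex.exp (-c * x)) (Complex.exp (-c * x) * (-c)) x := by
      have := ((Complex.hasDerivAt_exp (-c * x)).comp x
        (((hasDerivAt_id (x:ℂ)).const_mul (-c)).comp_ofReal))
      rw [mul_one] at this; exact this
    have := (h1.div_const c).neg
    have hc0 : c ≠ 0 := fun h => by simp [h] at hc
    have heq : (fun x : ℝ => -Complex.exp (-c * x) / c)
        = fun x : ℝ => -(Complex.exp (-c * x) / c) := by funext y; ring
    rw [heq]
    refine this.congr_deriv ?_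
    rw [mul_neg, neg_div, neg_neg, mul_div_assoc, div_self hc0, mul_one]
  have htend : Tendsto (fun x : ℝ => -Complex.exp (-c * x) / c) atTop (𝓝 0) := by
    have : Tendsto (fun x : ℝ => Complex.exp (-c * x)) atTop (𝓝 0) := by
      rw [tendsto_zero_iff_norm_tendsto_zero]
      have h : ∀ x : ℝ, ‖Complex.exp (-c * x)‖ = Real.exp (-c.re * x) := by
        intro x
        rw [Complex.norm_exp]
        norm_num [Complex.mul_re]
      simp_rw [h]
      exact Real.tendsto_exp_atBot.comp (tendsto_id.const_mul_atTop_of_neg (neg_lt_zero.2 hc))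
    simpa using (this.neg.div_const c)
  have := integral_Ioi_of_hasDerivAt_of_tendsto (a := (0:ℝ))
    ((hderiv 0 Set.self_mem_Ici).continuousAt.continuousWithinAt)
    (fun x hx => hderiv x (Set.mem_Ici.2 (le_of_lt (Set.mem_Ioi.1 hx)))) hint htend
  simp only [Complex.ofReal_zero, mul_zero, Complex.exp_zero] at this
  rw [this]; ring

/-- Any continuous function dominated by `exp (-|x|/2)` is integrable. -/
lemma integrable_of_le_exp (f : ℝ → ℂ) (hc : Continuous f)
    (hb : ∀ x : ℝ, ‖f x‖ ≤ Real.exp (-|x| / 2)) : Integrable f := by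
  have key : ∀ (g : ℝ → ℂ), Continuous g → (∀ x : ℝ, ‖g x‖ ≤ Real.exp (-|x| / 2)) →
      IntegrableOn g (Set.Ioi 0) := by
    intro g hgc hgb
    apply (exp_neg_integrableOn_Ioi 0 (by norm_num : (0:ℝ) < 1/2)).mono'
      hgc.aestronglyMeasurable.restrict
    filter_upwards [ae_restrict_mem measurableSet_Ioi] with x hx
    calc ‖g x‖ ≤ Real.exp (-|x| / 2) := hgb x
    _ = Real.exp (-(1/2) * x) := by rw [abs_of_pos hx]; ring_nf
  have h1 : IntegrableOn f (Set.Ioi 0) := key f hc hb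
  have h2 : IntegrableOn f (Set.Iic 0) := by
    have h2' : IntegrableOn (fun x => f (-x)) (Set.Ici 0) := by
      rw [integrableOn_Ici_iff_integrableOn_Ioi]
      exact key _ (hc.comp continuous_neg) (fun x => by simpa using hb (-x))
    have h3 : Integrable ((Set.Ici (0:ℝ)).indicator (fun x => f (-x))) :=
      (integrable_indicator_iff measurableSet_Ici).2 h2'
    have h4 := h3.comp_neg
    have h5 : (fun x : ℝ => (Set.Ici (0:ℝ)).indicator (fun x => f (-x)) (-x))
        = (Set.Iic (0:ℝ)).indicator f := by
      funext x
      simp [Set.indicator_apply, neg_nonneg]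
    rw [h5] at h4
    exact (integrable_indicator_iff measurableSet_Iic).1 h4
  have : Set.Iic (0:ℝ) ∪ Set.Ioi 0 = Set.univ := Set.Iic_union_Ioi
  rw [← integrableOn_univ, ← this]
  exact h2.union h1

lemma fourier_exp_neg_abs (t : ℝ) :
    𝓕 (fun x : ℝ => (Real.exp (-|x| / 2) : ℂ)) t = ((((1:ℝ)/4) + (2 * π * t) ^ 2 : ℝ))⁻¹ := by
  rw [Real.fourier_real_eq_integral_exp_smul]
  set c1 : ℂ := (1/2 : ℂ) + (2 * π * t) * Complex.I with hc1def
  set c2 : ℂ := (1/2 : ℂ) - (2 * π * t) * Complex.I with hc2def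
  have hc1 : 0 < c1.re := by norm_num [hc1def]
  have hc2 : 0 < c2.re := by norm_num [hc2def]
  set h : ℝ → ℂ := fun v => Complex.exp (↑(-2 * π * v * t) * Complex.I) • (Real.exp (-|v| / 2) : ℂ)
    with hhdef
  have hcont : Continuous h := by
    rw [hhdef]; apply Continuous.fun_smul
    · exact Complex.continuous_exp.comp (by continuity)
    · exact Complex.continuous_ofReal.comp (Real.continuous_exp.comp (by continuity))
  have hbnd : ∀ x : ℝ, ‖h x‖ ≤ Real.exp (-|x| / 2) := by
    intro x
    simp only [hhdef, smul_eq_mul, norm_mul,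
      Complex.norm_exp_ofReal_mul_I, Complex.norm_real, Real.norm_eq_abs, one_mul,
      abs_of_pos (Real.exp_pos _), le_refl]
  have hint := integrable_of_le_exp h hcont hbnd
  have hIoi : ∫ v in Set.Ioi (0:ℝ), h v = 1 / c1 := by
    rw [← integral_cexp_neg_Ioi' hc1]
    apply setIntegral_congr_fun measurableSet_Ioi
    intro v hv
    simp only [hhdef, smul_eq_mul, abs_of_pos (Set.mem_Ioi.1 hv : (0:ℝ) < v)]
    rw [Complex.ofReal_exp, ← Complex.exp_add]
    congr 1
    push_cast [hc1def]
    ring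
  have hIic : ∫ v in Set.Iic (0:ℝ), h v = 1 / c2 := by
    have := integral_comp_neg_Ioi (0:ℝ) h
    rw [neg_zero] at this
    rw [← this, ← integral_cexp_neg_Ioi' hc2]
    apply setIntegral_congr_fun measurableSet_Ioi
    intro v hv
    simp only [hhdef, smul_eq_mul, abs_neg, abs_of_pos (Set.mem_Ioi.1 hv : (0:ℝ) < v)]
    rw [Complex.ofReal_exp, ← Complex.exp_add]
    congr 1
    push_cast [hc2def]
    ring
  have hsplit := intervalIntegral.integral_Iic_add_Ioi (b := (0:ℝ))
    hint.integrableOn hint.integrableOn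
  rw [← hsplit, hIic, hIoi]
  have h1 : c1 ≠ 0 := fun h => by rw [h] at hc1; simp at hc1
  have h2 : c2 ≠ 0 := fun h => by rw [h] at hc2; simp at hc2
  have h3 : (((1:ℝ)/4 + (2 * π * t) ^ 2 : ℝ) : ℂ) ≠ 0 := by
    rw [Ne, Complex.ofReal_eq_zero]
    positivity
  rw [Complex.ofReal_inv, div_add_div _ _ h2 h1, div_eq_iff (mul_ne_zero h2 h1),
    inv_mul_eq_div, eq_div_iff h3]
  push_cast [hc1def, hc2def]
  ring_nf
  rw [Complex.I_sq]
  ring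

lemma integrable_kernel_aux (f : ℝ → ℂ) (hc : Continuous f) (C : ℝ)
    (hb : ∀ t : ℝ, ‖f t‖ ≤ C) : Integrable fun t : ℝ => f t / ((1/4 : ℝ) + t ^ 2) := by
  have hC : 0 ≤ C := le_trans (norm_nonneg _) (hb 0)
  have hd : ∀ t : ℝ, (0:ℝ) < 1/4 + t ^ 2 := fun t => by positivity
  apply ((integrable_inv_one_add_sq.const_mul (4*C)).mono' ?_ ?_)
  · apply Continuous.aestronglyMeasurable
    apply hc.div (by continuity)
    intro t
    exact_mod_cast (Complex.ofReal_ne_zero).2 (hd t).ne'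
  · filter_upwards with t
    rw [norm_div]
    have h1 : ‖(((1/4 : ℝ) : ℂ) + (t : ℂ) ^ 2)‖ = 1/4 + t ^ 2 := by
      rw [show (((1/4 : ℝ) : ℂ) + (t : ℂ) ^ 2) = (((1/4 + t ^ 2 : ℝ)) : ℂ) by push_cast; ring,
        Complex.norm_real, Real.norm_eq_abs, abs_of_pos (hd t)]
    rw [h1]
    have h2 : (0:ℝ) < 1 + t ^ 2 := by positivity
    rw [div_le_iff₀ (hd t)]
    have h3 : 4 * C * (1 + t ^ 2)⁻¹ * (1/4 + t ^ 2) = C * (4 * (1/4 + t ^ 2) / (1 + t ^ 2)) := by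
      field_simp
    rw [h3]
    refine le_trans (hb t) (le_mul_of_one_le_right hC ?_)
    rw [le_div_iff₀ h2]
    nlinarith [sq_nonneg t]

/-- The key Fourier integral. -/
lemma integral_cexp_mul_I_div (x : ℝ) :
    ∫ t : ℝ, Complex.exp (↑(x * t) * Complex.I) / ((1/4 : ℝ) + t ^ 2)
      = ((2 * π * Real.exp (-|x| / 2) : ℝ) : ℂ) := by
  set φ : ℝ → ℂ := fun s => Complex.exp (↑(x * s) * Complex.I) / ((1/4 : ℝ) + s ^ 2) with hφdef
  set g : ℝ → ℂ := fun v => (Real.exp (-|v| / 2) : ℂ) with hgdef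
  have hg_cont : Continuous g :=
    Complex.continuous_ofReal.comp (Real.continuous_exp.comp (by continuity))
  have hg_int : Integrable g := integrable_of_le_exp g hg_cont (fun v => le_of_eq (by
    rw [hgdef]
    rw [Complex.norm_real, Real.norm_eq_abs, abs_of_pos (Real.exp_pos _)]))
  have hpi2 : (9:ℝ) ≤ π ^ 2 := by nlinarith [Real.pi_gt_three]
  have hFg : 𝓕 g = fun t : ℝ => ((((1/4 : ℝ) + (2 * π * t) ^ 2)⁻¹ : ℝ) : ℂ) :=
    funext fourier_exp_neg_abs
  have hFg_int : Integrable (𝓕 g) := by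
    rw [hFg]
    have hcont : Continuous fun t : ℝ => ((((1/4 : ℝ) + (2 * π * t) ^ 2)⁻¹ : ℝ) : ℂ) := by
      apply Complex.continuous_ofReal.comp
      apply Continuous.inv₀ (by continuity)
      intro t; positivity
    apply (integrable_inv_one_add_sq.const_mul 4).mono' hcont.aestronglyMeasurable
    filter_upwards with t
    have hd : (0:ℝ) < 1/4 + (2*π*t)^2 := by positivity
    have h2 : (0:ℝ) < 1 + t^2 := by positivity
    rw [Complex.norm_real, Real.norm_eq_abs, abs_of_pos (inv_pos.2 hd),
      show (4:ℝ) * (1 + t^2)⁻¹ = ((1 + t^2)/4)⁻¹ by field_simp]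
    apply inv_anti₀ (by positivity)
    nlinarith [mul_le_mul_of_nonneg_right hpi2 (sq_nonneg t)]
  have hinv := hg_int.fourierInv_fourier_eq hFg_int (hg_cont.continuousAt (x := x))
  rw [Real.fourierInv_eq_fourier_neg,
    Real.fourier_real_eq_integral_exp_smul, hFg] at hinv
  have hc : ∀ v : ℝ, Complex.exp (↑(-2 * π * v * (-x)) * Complex.I)
      • ((((1/4 : ℝ) + (2 * π * v) ^ 2)⁻¹ : ℝ) : ℂ) = φ (2 * π * v) := by
    intro v
    simp only [hφdef, smul_eq_mul, Complex.ofReal_inv, ← div_eq_mul_inv]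
    have e1 : -2 * π * v * (-x) = x * (2 * π * v) := by ring
    rw [e1]
    congr 1
    push_cast
    ring
  beta_reduce at hinv
  have hinv2 : ∫ v : ℝ, φ (2 * π * v) = g x := by
    rw [← hinv]; congr 1; funext v; exact (hc v).symm
  have hπ : (0:ℝ) < 2 * π := by positivity
  rw [Measure.integral_comp_mul_left φ (2 * π), abs_of_pos (inv_pos.2 hπ)] at hinv2
  have hfin : (∫ y, φ y) = (2 * π) • g x := by
    rw [← hinv2, smul_smul, mul_inv_cancel₀ hπ.ne', one_smul]
  refine hfin.trans ?_
  rw [hgdef, real_smul]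
  push_cast
  ring

noncomputable def psiAux (k : ℕ) (t : ℝ) : ℂ :=
  if k = 0 then 0 else (k : ℂ) ^ ((1/2 : ℂ) - Complex.I * t)

lemma psiAux_eq {k : ℕ} (hk : k ≠ 0) (t : ℝ) :
    psiAux k t = ((Real.sqrt k : ℝ) : ℂ)
      * Complex.exp (↑(-(Real.log k * t)) * Complex.I) := by
  have hk' : (0:ℝ) < k := by exact_mod_cast Nat.pos_of_ne_zero hk
  rw [psiAux, if_neg hk,
    Complex.cpow_def_of_ne_zero (Nat.cast_ne_zero.2 hk : (k:ℂ) ≠ 0)]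
  have hlog : Complex.log (k : ℂ) = ((Real.log k : ℝ) : ℂ) := by
    rw [← Complex.ofReal_natCast, Complex.ofReal_log hk'.le]
  rw [hlog, show ((Real.log k : ℝ) : ℂ) * ((1/2 : ℂ) - Complex.I * t)
      = ((Real.log k / 2 : ℝ) : ℂ) + ↑(-(Real.log k * t)) * Complex.I by push_cast; ring,
    Complex.exp_add]
  congr 1
  rw [← Complex.ofReal_exp]
  norm_cast
  rw [Real.sqrt_eq_rpow, Real.rpow_def_of_pos hk']
  ring_nf

lemma psiAux_norm (k : ℕ) (t : ℝ) : ‖psiAux k t‖ = Real.sqrt k := by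
  rcases eq_or_ne k 0 with h | h
  · simp [psiAux, h]
  · rw [psiAux_eq h, norm_mul, Complex.norm_real,
      Complex.norm_exp_ofReal_mul_I, Real.norm_eq_abs, _root_.abs_of_nonneg (Real.sqrt_nonneg _), mul_one]

lemma psiAux_continuous (k : ℕ) : Continuous (psiAux k) := by
  rcases eq_or_ne k 0 with h | h
  · simp only [psiAux, h, if_pos rfl]; exact continuous_const
  · have : psiAux k = fun t => ((Real.sqrt k : ℝ) : ℂ)
        * Complex.exp (↑(-(Real.log k * t)) * Complex.I) := funext (psiAux_eq h)
    rw [this]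
    apply continuous_const.mul
    exact Complex.continuous_exp.comp (by continuity)

lemma sqrt_mul_exp_min {a b : ℝ} (ha : 0 < a) (hb : 0 < b) :
    Real.sqrt a * Real.sqrt b * Real.exp (-|Real.log b - Real.log a| / 2) = min a b := by
  wlog hab : a ≤ b generalizing a b
  · rw [abs_sub_comm, min_comm, mul_comm (Real.sqrt a)]
    exact this hb ha (le_of_not_ge hab)
  rw [_root_.abs_of_nonneg (sub_nonneg.2 (Real.log_le_log ha hab)), min_eq_left hab]
  have h1 : Real.exp (-(Real.log b - Real.log a) / 2) = Real.sqrt a / Real.sqrt b := by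
    rw [show -(Real.log b - Real.log a) / 2 = Real.log a / 2 - Real.log b / 2 by ring,
      Real.exp_sub]
    congr 1 <;> rw [Real.sqrt_eq_rpow, Real.rpow_def_of_pos (by assumption)] <;> ring_nf
  rw [h1]
  have hb' : Real.sqrt b ≠ 0 := (Real.sqrt_pos.2 hb).ne'
  field_simp
  rw [Real.sq_sqrt ha.le]

lemma psiAux_pair (k l : ℕ) :
    ∫ t : ℝ, psiAux k t * (starRingEnd ℂ) (psiAux l t) / ((1/4 : ℝ) + t ^ 2)
      = ((2 * π * (min k l : ℕ) : ℝ) : ℂ) := by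
  rcases eq_or_ne k 0 with hk | hk
  · simp [psiAux, hk]
  rcases eq_or_ne l 0 with hl | hl
  · simp [psiAux, hl]
  have hk' : (0:ℝ) < k := by exact_mod_cast Nat.pos_of_ne_zero hk
  have hl' : (0:ℝ) < l := by exact_mod_cast Nat.pos_of_ne_zero hl
  have hrw : (fun t : ℝ => psiAux k t * (starRingEnd ℂ) (psiAux l t) / ((1/4 : ℝ) + t ^ 2))
      = fun t : ℝ => ((Real.sqrt k * Real.sqrt l : ℝ) : ℂ)
        * (Complex.exp (↑((Real.log l - Real.log k) * t) * Complex.I) / ((1/4 : ℝ) + t ^ 2)) := by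
    funext t
    rw [psiAux_eq hk, psiAux_eq hl, map_mul, Complex.conj_ofReal, ← Complex.exp_conj]
    have hconj : (starRingEnd ℂ) (↑(-(Real.log l * t)) * Complex.I)
        = ↑(Real.log l * t) * Complex.I := by
      rw [map_mul, Complex.conj_ofReal, Complex.conj_I]
      push_cast; ring
    rw [hconj, mul_mul_mul_comm, ← Complex.exp_add,
      show (↑(-(Real.log k * t)) * Complex.I + ↑(Real.log l * t) * Complex.I : ℂ)
        = ↑((Real.log l - Real.log k) * t) * Complex.I by push_cast; ring,
      ← Complex.ofReal_mul, mul_div_assoc]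
  rw [hrw, integral_const_mul, integral_cexp_mul_I_div (Real.log l - Real.log k),
    ← Complex.ofReal_mul]
  congr 1
  rw [show Real.sqrt k * Real.sqrt l * (2 * π * Real.exp (-|Real.log l - Real.log k| / 2))
    = 2 * π * (Real.sqrt k * Real.sqrt l * Real.exp (-|Real.log l - Real.log k| / 2)) by ring,
    sqrt_mul_exp_min hk' hl']
  congr 1
  rcases le_total k l with h | h
  · rw [min_eq_left h, min_eq_left (Nat.cast_le.2 h)]
  · rw [min_eq_right h, min_eq_right (Nat.cast_le.2 h)]

lemma psiAux_pair_integrable (k l : ℕ) :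
    Integrable fun t : ℝ =>
      psiAux k t * (starRingEnd ℂ) (psiAux l t) / ((1/4 : ℝ) + t ^ 2) := by
  apply integrable_kernel_aux _ ?_ (Real.sqrt k * Real.sqrt l) ?_
  · exact (psiAux_continuous k).mul (Complex.continuous_conj.comp (psiAux_continuous l))
  · intro t
    rw [norm_mul, psiAux_norm, RCLike.norm_conj, psiAux_norm]

lemma lubinskyPsi_eq {n : ℕ} (hn : 1 ≤ n) (t : ℝ) :
    lubinskyPsi n t = psiAux n t - psiAux (n - 1) t := by
  rcases eq_or_lt_of_le hn with h1 | h2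
  · rw [← h1]
    simp [lubinskyPsi, psiAux, Complex.one_cpow]
  · rw [lubinskyPsi, if_neg (by omega), psiAux, if_neg (by omega), psiAux, if_neg (by omega)]
    have : ((n - 1 : ℕ) : ℂ) = (n : ℂ) - 1 := by
      push_cast [Nat.cast_sub hn]; ring
    rw [this]

theorem lubinskyPsi_orthonormal (n m : ℕ) (hn : 1 ≤ n) (hm : 1 ≤ m) :
    (1 / (2 * Real.pi) : ℂ) *
        ∫ t : ℝ, lubinskyPsi n t * (starRingEnd ℂ) (lubinskyPsi m t) / ((1/4 : ℝ) + t ^ 2) =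
      if n = m then 1 else 0 := by
  have hexp : (fun t : ℝ =>
      lubinskyPsi n t * (starRingEnd ℂ) (lubinskyPsi m t) / ((1/4 : ℝ) + t ^ 2))
      = fun t : ℝ =>
        (psiAux n t * (starRingEnd ℂ) (psiAux m t) / ((1/4 : ℝ) + t ^ 2)
          - psiAux n t * (starRingEnd ℂ) (psiAux (m-1) t) / ((1/4 : ℝ) + t ^ 2))
        - (psiAux (n-1) t * (starRingEnd ℂ) (psiAux m t) / ((1/4 : ℝ) + t ^ 2)
          - psiAux (n-1) t * (starRingEnd ℂ) (psiAux (m-1) t) / ((1/4 : ℝ) + t ^ 2)) := by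
    funext t
    rw [lubinskyPsi_eq hn, lubinskyPsi_eq hm, map_sub]
    ring
  rw [hexp, integral_sub ?hi1 ?hi2, integral_sub ?hi3 ?hi4, integral_sub ?hi5 ?hi6,
    psiAux_pair, psiAux_pair, psiAux_pair, psiAux_pair]
  case hi1 => exact (psiAux_pair_integrable n m).sub (psiAux_pair_integrable n (m-1))
  case hi2 => exact (psiAux_pair_integrable (n-1) m).sub (psiAux_pair_integrable (n-1) (m-1))
  case hi3 => exact psiAux_pair_integrable n m
  case hi4 => exact psiAux_pair_integrable n (m-1)
  case hi5 => exact psiAux_pair_integrable (n-1) m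
  case hi6 => exact psiAux_pair_integrable (n-1) (m-1)
  have hπ : (π : ℂ) ≠ 0 := Complex.ofReal_ne_zero.2 Real.pi_ne_zero
  rcases lt_trichotomy n m with h | h | h
  · rw [if_neg h.ne, min_eq_left h.le, min_eq_left (by omega : n ≤ m - 1),
      min_eq_left (by omega : n - 1 ≤ m), min_eq_left (by omega : n - 1 ≤ m - 1)]
    push_cast
    ring
  · subst h
    rw [if_pos rfl, min_self, min_eq_right (by omega : n - 1 ≤ n),
      min_eq_left (by omega : n - 1 ≤ n), min_self]
    push_cast [Nat.cast_sub hn]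
    field_simp
    ring
  · rw [if_neg (by omega : ¬ n = m), min_eq_right h.le, min_eq_right (by omega : m - 1 ≤ n),
      min_eq_right (by omega : m ≤ n - 1), min_eq_right (by omega : m - 1 ≤ n - 1)]
    push_cast
    ring
end

section
/- Let \psi_n be the Lubinsky Dirichlet orthonormal polynomials (\psi_1 = 1, \psi_n(t) = n^{1/2-it} - (n-1)^{1/2-it}) and K_n(u,v) = \sum_{k=1}^n \psi_k(u) \overline{\psi_k(v)}. Then for each fixed real u, K_n(u,u) = |1/2 + iu|^2 \log n \, (1 + o(1)) as n \to \infty, uniformly for u in compact subsets of \mathbb{R}. -/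
open Filter Topology

/-- The Lubinsky reproducing kernel `Kₙ(u,v) = ∑_{k=1}^n ψₖ(u) conj (ψₖ(v))`. -/
noncomputable def lubinskyKernel (n : ℕ) (u v : ℝ) : ℂ :=
  ∑ k ∈ Finset.Icc 1 n, lubinskyPsi k u * (starRingEnd ℂ) (lubinskyPsi k v)


-- normSq of difference of cpow's of positive reals
lemma normSq_cpow_sub (x y u : ℝ) (hx : 0 < x) (hy : 0 < y) :
    Complex.normSq ((x:ℂ) ^ ((1/2 : ℂ) - Complex.I * u) - (y:ℂ) ^ ((1/2 : ℂ) - Complex.I * u)) =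
      x + y - 2 * Real.sqrt (x * y) * Real.cos (u * (Real.log x - Real.log y)) := by
  have hx0 : (x:ℂ) ≠ 0 := by exact_mod_cast hx.ne'
  have hy0 : (y:ℂ) ≠ 0 := by exact_mod_cast hy.ne'
  set a := Real.log x with ha
  set b := Real.log y with hb
  have hxa : (x:ℂ) ^ ((1/2 : ℂ) - Complex.I * u) = Complex.exp ((a:ℂ) * ((1/2 : ℂ) - Complex.I * u)) := by
    rw [Complex.cpow_def_of_ne_zero hx0, ← Complex.ofReal_log hx.le]
  have hyb : (y:ℂ) ^ ((1/2 : ℂ) - Complex.I * u) = Complex.exp ((b:ℂ) * ((1/2 : ℂ) - Complex.I * u)) := by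
    rw [Complex.cpow_def_of_ne_zero hy0, ← Complex.ofReal_log hy.le]
  have hns : ∀ z : ℂ, Complex.normSq (Complex.exp z) = Real.exp z.re * Real.exp z.re := by
    intro z
    rw [← Complex.sq_norm, Complex.norm_exp]; ring
  rw [hxa, hyb, Complex.normSq_sub, ← Complex.exp_conj, ← Complex.exp_add, hns, hns]
  have h1 : ((a:ℂ) * ((1/2 : ℂ) - Complex.I * u)).re = a / 2 := by
    simp [Complex.mul_re, Complex.sub_re, Complex.sub_im]; ring
  have h2 : ((b:ℂ) * ((1/2 : ℂ) - Complex.I * u)).re = b / 2 := by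
    simp [Complex.mul_re, Complex.sub_re, Complex.sub_im]; ring
  have h3 : ((a:ℂ) * ((1/2 : ℂ) - Complex.I * u) + (starRingEnd ℂ) ((b:ℂ) * ((1/2 : ℂ) - Complex.I * u))).re = a/2 + b/2 := by
    simp [Complex.add_re, Complex.mul_re, h1]; ring
  have h4 : ((a:ℂ) * ((1/2 : ℂ) - Complex.I * u) + (starRingEnd ℂ) ((b:ℂ) * ((1/2 : ℂ) - Complex.I * u))).im = -(u*a) + u*b := by
    simp [Complex.add_im, Complex.mul_im]; ring
  rw [Complex.exp_re, h1, h2, h3, h4]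
  have hea : Real.exp a = x := Real.exp_log hx
  have heb : Real.exp b = y := Real.exp_log hy
  have hsq : Real.exp (a/2 + b/2) = Real.sqrt (x * y) := by
    rw [show x * y = Real.exp (a/2 + b/2) * Real.exp (a/2+b/2) by
      rw [← Real.exp_add]; rw [show a/2+b/2+(a/2+b/2) = a + b by ring, Real.exp_add, hea, heb]]
    rw [Real.sqrt_mul_self (Real.exp_nonneg _)]
  have hea2 : Real.exp (a/2) * Real.exp (a/2) = x := by rw [← Real.exp_add]; rw [show a/2+a/2 = a by ring]; exact hea
  have heb2 : Real.exp (b/2) * Real.exp (b/2) = y := by rw [← Real.exp_add]; rw [show b/2+b/2 = b by ring]; exact heb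
  have hc : Real.cos (-(u*a) + u*b) = Real.cos (u * (a - b)) := by
    rw [show -(u*a) + u*b = -(u*(a-b)) by ring, Real.cos_neg]
  rw [hea2, heb2, hsq, hc]; ring


set_option maxHeartbeats 1000000 in
lemma alg_hVl (M u x s δ c : ℝ) (hu2 : u^2 ≤ M^2) (hx2 : 2 ≤ x)
    (hs0 : 0 ≤ s) (hsx : s ≤ x) (hsy : x - 1 ≤ s)
    (hθx : u^2 ≤ (u*δ)^2*x^2) (hθ4 : (u*δ)^4*(x-1)^4 ≤ M^4)
    (hcu : c ≤ 1 - (u*δ)^2/2 + (u*δ)^4*(5/96)) :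
    -(M^2*(x-1)^2 + 2*M^4*(x-1)^2) ≤ 2*x^2*(x-1)^2*s*(1-c) - u^2*x*(x-1)^2 := by
  have hxpos : (0:ℝ) < x := by linarith
  have hy1 : (1:ℝ) ≤ x - 1 := by linarith
  have hpos : (0:ℝ) ≤ x^2*(x-1)^2*s := by positivity
  have e1 := mul_nonneg hpos (by linarith : (0:ℝ) ≤ 2*(1-c) - ((u*δ)^2 - (u*δ)^4*(5/48)))
  have h1 := mul_nonneg (mul_nonneg (mul_nonneg (sq_nonneg x) (sq_nonneg (x-1)))
    (sub_nonneg.2 hsy)) (sq_nonneg (u*δ))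
  have h2 := mul_nonneg (by positivity : (0:ℝ) ≤ (x-1)^3) (sub_nonneg.2 hθx)
  have h3 := mul_nonneg (sub_nonneg.2 hu2) (sq_nonneg (x-1))
  have hQ : (5/48)*x^2*s*(u*δ)^4 ≤ 2*M^4 := by
    have g1 := mul_nonneg (mul_nonneg (sq_nonneg x) hs0) (sub_nonneg.2 hθ4)
    have g2 := mul_nonneg (mul_nonneg (sq_nonneg x) (by positivity : (0:ℝ) ≤ M^4))
      (sub_nonneg.2 hsx)
    have g3 : (x/2)^4 ≤ (x-1)^4 := pow_le_pow_left₀ (by linarith) (by linarith) 4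
    have g4 : (5/48)*x^3 ≤ 2*(x-1)^4 := by
      have q := mul_nonneg (pow_nonneg hxpos.le 3) (by linarith : (0:ℝ) ≤ 6*x - 5)
      nlinarith [g3, q]
    have g5 := mul_nonneg (by positivity : (0:ℝ) ≤ M^4) (sub_nonneg.2 g4)
    have hq : ((5/48)*x^2*s*(u*δ)^4)*(x-1)^4 ≤ (2*M^4)*(x-1)^4 := by
      nlinarith [g1, g2, g5]
    have hy4 : (1:ℝ) ≤ (x-1)^4 := by
      have := pow_le_pow_left₀ (by norm_num : (0:ℝ) ≤ 1) hy1 4; simpa using this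
    have hQ0 : (0:ℝ) ≤ (5/48)*x^2*s*(u*δ)^4 := by positivity
    nlinarith [hq, hy4, hQ0]
  have e3 := mul_le_mul_of_nonneg_right hQ (sq_nonneg (x-1))
  nlinarith [e1, h1, h2, h3, e3]


set_option maxHeartbeats 1000000 in
lemma alg_tail (M u x s c : ℝ) (hx2 : 2 ≤ x)
    (hW1a : 0 ≤ x^2*(x + (x-1) - 2*s) - x/4)
    (hW1b : x^2*(x + (x-1) - 2*s) - x/4 ≤ 1/2)
    (hVu : 2*x^2*(x-1)^2*s*(1-c) - u^2*x*(x-1)^2 ≤ 8*M^2*(x-1)^2)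
    (hVl : -(M^2*(x-1)^2 + 2*M^4*(x-1)^2) ≤ 2*x^2*(x-1)^2*s*(1-c) - u^2*x*(x-1)^2) :
    |(x + (x-1) - 2*s*c) - (1/4+u^2)/x| ≤ (1 + 9*M^2 + 2*M^4)/x^2 := by
  have hxpos : (0:ℝ) < x := by linarith
  have hy1 : (1:ℝ) ≤ x - 1 := by linarith
  have hM2 : (0:ℝ) ≤ M^2 := sq_nonneg M
  have hM4 : (0:ℝ) ≤ M^4 := by positivity
  have key_up : (x-1)^2 * (x^2*(x + (x-1) - 2*s*c) - (1/4+u^2)*x)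
      ≤ (1 + 9*M^2 + 2*M^4)*(x-1)^2 := by
    have q1 := mul_nonneg (sq_nonneg (x-1)) (by linarith : (0:ℝ) ≤ 1/2 - (x^2*(x + (x-1) - 2*s) - x/4))
    have q2 := mul_nonneg (by positivity : (0:ℝ) ≤ 1/2 + M^2 + 2*M^4) (sq_nonneg (x-1))
    nlinarith [q1, q2, hVu]
  have key_lo : -((1 + 9*M^2 + 2*M^4)*(x-1)^2)
      ≤ (x-1)^2 * (x^2*(x + (x-1) - 2*s*c) - (1/4+u^2)*x) := by
    have q1 := mul_nonneg (sq_nonneg (x-1)) hW1a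
    have q2 := mul_nonneg hM2 (sq_nonneg (x-1))
    have q3 := mul_nonneg hM4 (sq_nonneg (x-1))
    nlinarith [q1, q2, q3, hVl]
  have hy2 : (1:ℝ) ≤ (x-1)^2 := by nlinarith
  have hRu : x^2*(x + (x-1) - 2*s*c) - (1/4+u^2)*x ≤ 1 + 9*M^2 + 2*M^4 := by
    nlinarith [key_up, hy2]
  have hRl : -(1 + 9*M^2 + 2*M^4) ≤ x^2*(x + (x-1) - 2*s*c) - (1/4+u^2)*x := by
    nlinarith [key_lo, hy2]
  have hrw : (x + (x-1) - 2*s*c) - (1/4+u^2)/x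
      = (x^2*(x + (x-1) - 2*s*c) - (1/4+u^2)*x) / x^2 := by
    field_simp
  rw [hrw, abs_le]
  constructor
  · rw [show -((1 + 9*M^2 + 2*M^4)/x^2) = (-(1 + 9*M^2 + 2*M^4))/x^2 by ring]
    exact div_le_div_of_nonneg_right hRl (by positivity)
  · exact (div_le_div_iff_of_pos_right (by positivity)).mpr hRu

set_option maxHeartbeats 1000000 in
lemma alg_fine (M u x s δ c : ℝ) (hM : 0 ≤ M) (hu2 : u^2 ≤ M^2) (hx2 : 2 ≤ x)
    (hs2 : s^2 = x*(x-1)) (hs0 : 0 ≤ s) (hsx : s ≤ x) (hsy : x - 1 ≤ s)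
    (hδy : δ*(x-1) ≤ 1) (hδx : 1 ≤ δ*x) (hδ0 : 0 < δ)
    (hcl : 1 - (u*δ)^2/2 ≤ c) (hcu : c ≤ 1 - (u*δ)^2/2 + (u*δ)^4*(5/96)) :
    |(x + (x-1) - 2*s*c) - (1/4+u^2)/x| ≤ (1 + 9*M^2 + 2*M^4)/x^2 := by
  have hxpos : (0:ℝ) < x := by linarith
  have hy1 : (1:ℝ) ≤ x - 1 := by linarith
  have hypos : (0:ℝ) < x - 1 := by linarith
  have hδy0 : 0 ≤ δ * (x-1) := by positivity
  have hθy : (u*δ)^2*(x-1)^2 ≤ u^2 := by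
    have h := mul_nonneg (mul_nonneg (sq_nonneg u) (sub_nonneg.2 hδy))
      (by linarith : (0:ℝ) ≤ 1 + δ*(x-1))
    nlinarith [h]
  have hθx : u^2 ≤ (u*δ)^2*x^2 := by
    have h := mul_nonneg (mul_nonneg (sq_nonneg u) (sub_nonneg.2 hδx))
      (by nlinarith : (0:ℝ) ≤ δ*x + 1)
    nlinarith [h]
  have hθ4 : (u*δ)^4*(x-1)^4 ≤ M^4 := by
    have h2 : 0 ≤ (u*δ)^2*(x-1)^2 := by positivity
    have q1 := mul_le_mul_of_nonneg_right hθy h2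
    have q2 := mul_le_mul_of_nonneg_left hθy (sq_nonneg u)
    have q3 := mul_le_mul hu2 hu2 (sq_nonneg u) (sq_nonneg M)
    nlinarith [q1, q2, q3]
  have hAprod : (x + (x-1) - 2*s) * (x + (x-1) + 2*s) = 1 := by
    have h : (x + (x-1) - 2*s) * (x + (x-1) + 2*s) = (2*x-1)^2 - 4*s^2 := by ring
    rw [h, hs2]; ring
  have hden : 0 < x + (x-1) + 2*s := by linarith
  have hA0 : 0 < x + (x-1) - 2*s := by
    have h : x + (x-1) - 2*s = 1/(x + (x-1) + 2*s) := eq_div_of_mul_eq hden.ne' hAprod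
    rw [h]; positivity
  have hW1a : 0 ≤ x^2*(x + (x-1) - 2*s) - x/4 := by
    have q1 : x*((x + (x-1) - 2*s)*(x + (x-1) + 2*s)) = x*1 := by rw [hAprod]
    have q2 := mul_nonneg (mul_nonneg hxpos.le hA0.le) (by linarith : (0:ℝ) ≤ 2*x + 1 - 2*s)
    nlinarith [q1, q2]
  have hW1b : x^2*(x + (x-1) - 2*s) - x/4 ≤ 1/2 := by
    have hA43 : (x + (x-1) - 2*s) * (4*x - 3) ≤ 1 := by
      have q0 := mul_nonneg hA0.le (by linarith : (0:ℝ) ≤ 2*s - 2*(x-1))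
      nlinarith [q0, hAprod]
    have p1 := mul_le_mul_of_nonneg_right hA43 (by linarith : (0:ℝ) ≤ x + 2)
    have p2 := mul_nonneg hA0.le (by linarith : (0:ℝ) ≤ 5*x - 6)
    nlinarith [p1, p2]
  have hVu : 2*x^2*(x-1)^2*s*(1-c) - u^2*x*(x-1)^2 ≤ 8*M^2*(x-1)^2 := by
    have hpos : (0:ℝ) ≤ x^2*(x-1)^2*s := by positivity
    have e1 := mul_nonneg hpos (by linarith : (0:ℝ) ≤ (u*δ)^2 - 2*(1-c))
    have h1 := mul_nonneg (mul_nonneg (sq_nonneg x) hs0) (sub_nonneg.2 hθy)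
    have h2 := mul_nonneg (mul_nonneg (sq_nonneg x) (sq_nonneg u)) (sub_nonneg.2 hsx)
    have h3 := mul_nonneg (sub_nonneg.2 hu2) (by nlinarith : (0:ℝ) ≤ x*(2*x-1))
    have h4 := mul_nonneg (sq_nonneg M) (by nlinarith [sq_nonneg (x-2)] : (0:ℝ) ≤ 8*(x-1)^2 - 2*x^2)
    have h5 := mul_nonneg (sq_nonneg M) hxpos.le
    linarith [e1, h1, h2, h3, h4, h5]
  have hVl := alg_hVl M u x s δ c hu2 hx2 hs0 hsx hsy hθx hθ4 hcu
  exact alg_tail M u x s c hx2 hW1a hW1b hVu hVl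

lemma normSq_psi_eq {k : ℕ} (hk : 2 ≤ k) (u : ℝ) :
    Complex.normSq (lubinskyPsi k u) =
      (k:ℝ) + ((k:ℝ) - 1) - 2 * Real.sqrt ((k:ℝ) * ((k:ℝ)-1)) *
        Real.cos (u * (Real.log (k:ℝ) - Real.log ((k:ℝ)-1))) := by
  have hx : (0:ℝ) < (k:ℝ) := by positivity
  have hy : (0:ℝ) < (k:ℝ) - 1 := by
    have : (2:ℝ) ≤ (k:ℝ) := by exact_mod_cast hk
    linarith
  have hpsi : lubinskyPsi k u =
      (((k:ℝ)):ℂ) ^ ((1/2 : ℂ) - Complex.I * u) - ((((k:ℝ) - 1 : ℝ)):ℂ) ^ ((1/2 : ℂ) - Complex.I * u) := by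
    unfold lubinskyPsi
    rw [if_neg (by omega)]
    norm_num
  rw [hpsi, normSq_cpow_sub _ _ u hx hy]

lemma per_term_fine (M u : ℝ) (hM : 0 ≤ M) (hu : |u| ≤ M) (k : ℕ) (hk : M + 2 ≤ (k:ℝ)) :
    |Complex.normSq (lubinskyPsi k u) - (1/4 + u^2)/(k:ℝ)| ≤ (1 + 9*M^2 + 2*M^4)/(k:ℝ)^2 := by
  have hx2 : (2:ℝ) ≤ (k:ℝ) := by linarith
  have hk2 : 2 ≤ k := by exact_mod_cast hx2
  have hxpos : (0:ℝ) < (k:ℝ) := by linarith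
  have hypos : (0:ℝ) < (k:ℝ) - 1 := by linarith
  have hxM : M + 1 ≤ (k:ℝ) - 1 := by linarith
  rw [normSq_psi_eq hk2 u]
  -- analytic facts
  have hu2 : u^2 ≤ M^2 := by nlinarith [sq_abs u, abs_nonneg u]
  have hs2 : (Real.sqrt ((k:ℝ)*((k:ℝ)-1)))^2 = (k:ℝ)*((k:ℝ)-1) := Real.sq_sqrt (by positivity)
  have hs0 : 0 ≤ Real.sqrt ((k:ℝ)*((k:ℝ)-1)) := Real.sqrt_nonneg _
  have hsx : Real.sqrt ((k:ℝ)*((k:ℝ)-1)) ≤ (k:ℝ) := by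
    have h := Real.sqrt_le_sqrt (by nlinarith : (k:ℝ)*((k:ℝ)-1) ≤ (k:ℝ)^2)
    rwa [Real.sqrt_sq hxpos.le] at h
  have hsy : (k:ℝ) - 1 ≤ Real.sqrt ((k:ℝ)*((k:ℝ)-1)) := by
    have h := Real.sqrt_le_sqrt (by nlinarith : ((k:ℝ)-1)^2 ≤ (k:ℝ)*((k:ℝ)-1))
    rwa [Real.sqrt_sq hypos.le] at h
  have hδu : Real.log (k:ℝ) - Real.log ((k:ℝ)-1) ≤ 1/((k:ℝ)-1) := by
    have h := Real.log_le_sub_one_of_pos (div_pos hxpos hypos)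
    rw [Real.log_div hxpos.ne' hypos.ne'] at h
    have h2 : (k:ℝ)/((k:ℝ)-1) - 1 = 1/((k:ℝ)-1) := by field_simp; ring
    linarith [h2 ▸ h]
  have hδl : 1/(k:ℝ) ≤ Real.log (k:ℝ) - Real.log ((k:ℝ)-1) := by
    have h := Real.log_le_sub_one_of_pos (div_pos hypos hxpos)
    rw [Real.log_div hypos.ne' hxpos.ne'] at h
    have h2 : ((k:ℝ)-1)/(k:ℝ) - 1 = -(1/(k:ℝ)) := by field_simp; ring
    linarith [h2 ▸ h]
  have hδ0 : 0 < Real.log (k:ℝ) - Real.log ((k:ℝ)-1) :=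
    lt_of_lt_of_le (by positivity) hδl
  have hδy : (Real.log (k:ℝ) - Real.log ((k:ℝ)-1))*((k:ℝ)-1) ≤ 1 :=
    (le_div_iff₀ hypos).mp hδu
  have hδx : 1 ≤ (Real.log (k:ℝ) - Real.log ((k:ℝ)-1))*(k:ℝ) := by
    have := (div_le_iff₀ hxpos).mp hδl; linarith
  -- |θ| ≤ 1 and cosine bounds
  have hθ1 : |u * (Real.log (k:ℝ) - Real.log ((k:ℝ)-1))| ≤ 1 := by
    rw [abs_mul, abs_of_pos hδ0]
    have h1 : |u| * ((Real.log (k:ℝ) - Real.log ((k:ℝ)-1))*((k:ℝ)-1)) ≤ M * 1 :=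
      mul_le_mul hu hδy (by positivity) hM
    nlinarith [abs_nonneg u, hδ0.le, hxM, hM, hypos]
  have ccos := Real.cos_bound hθ1
  have habs4 : |u * (Real.log (k:ℝ) - Real.log ((k:ℝ)-1))|^4
      = (u * (Real.log (k:ℝ) - Real.log ((k:ℝ)-1)))^4 := by
    rw [← abs_pow, abs_of_nonneg (by positivity)]
  rw [habs4] at ccos
  have hcb := abs_le.mp ccos
  exact alg_fine M u (k:ℝ) _ _ _ hM hu2 hx2 hs2 hs0 hsx hsy hδy hδx hδ0
    (Real.one_sub_sq_div_two_le_cos) (by linarith [hcb.1])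

lemma per_term_crude (u : ℝ) {k : ℕ} (hk : 2 ≤ k) :
    Complex.normSq (lubinskyPsi k u) ≤ 4*(k:ℝ) := by
  rw [normSq_psi_eq hk u]
  have hx2 : (2:ℝ) ≤ (k:ℝ) := by exact_mod_cast hk
  have hxpos : (0:ℝ) < (k:ℝ) := by linarith
  have hs0 : 0 ≤ Real.sqrt ((k:ℝ)*((k:ℝ)-1)) := Real.sqrt_nonneg _
  have hsx : Real.sqrt ((k:ℝ)*((k:ℝ)-1)) ≤ (k:ℝ) := by
    have h := Real.sqrt_le_sqrt (by nlinarith : (k:ℝ)*((k:ℝ)-1) ≤ (k:ℝ)^2)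
    rwa [Real.sqrt_sq hxpos.le] at h
  have hc := Real.neg_one_le_cos (x := u * (Real.log (k:ℝ) - Real.log ((k:ℝ)-1)))
  nlinarith [mul_nonneg hs0 (by linarith : (0:ℝ) ≤ 1 + Real.cos (u * (Real.log (k:ℝ) - Real.log ((k:ℝ)-1))))]

lemma normSq_psi_one (u : ℝ) : Complex.normSq (lubinskyPsi 1 u) = 1 := by
  unfold lubinskyPsi; rw [if_pos (le_refl 1)]; simp

lemma sum_inv_sq_le (n : ℕ) : ∑ k ∈ Finset.Icc 2 n, 1/((k:ℝ))^2 ≤ 1 := by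
  rcases n with _ | m
  · simp
  · have key : ∀ m : ℕ, ∑ k ∈ Finset.Icc 2 (m+1), 1/((k:ℝ))^2 ≤ 1 - 1/((m:ℝ)+1) := by
      intro m
      induction m with
      | zero => simp
      | succ p ih =>
        rw [Finset.sum_Icc_succ_top (by omega : 2 ≤ p+1+1)]
        have hp1 : (0:ℝ) < (p:ℝ)+1 := by positivity
        have hp2 : (0:ℝ) < (p:ℝ)+2 := by positivity
        have key2 : 1/((p:ℝ)+2)^2 ≤ 1/((p:ℝ)+1) - 1/((p:ℝ)+2) := by
          rw [div_sub_div _ _ hp1.ne' hp2.ne', div_le_div_iff₀ (by positivity) (by positivity)]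
          nlinarith
        push_cast
        push_cast at ih
        have e1 : ((p:ℝ)+1+1) = (p:ℝ)+2 := by ring
        rw [e1]
        linarith [ih, key2]
    have h := key m
    have : (0:ℝ) ≤ 1/((m:ℝ)+1) := by positivity
    push_cast
    push_cast at h
    linarith

lemma harmonic_sum_bound {n : ℕ} (hn : 1 ≤ n) :
    |(∑ k ∈ Finset.Icc 1 n, 1/((k:ℝ))) - Real.log n| ≤ 1 := by
  have e : ∑ k ∈ Finset.Icc 1 n, 1/((k:ℝ)) = ((harmonic n : ℚ) : ℝ) := by
    rw [harmonic_eq_sum_Icc]; push_cast; simp [one_div]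
  have h1 : Real.log n ≤ ((harmonic n : ℚ) : ℝ) := by
    have h2 := log_add_one_le_harmonic n
    have h3 : Real.log n ≤ Real.log (n+1) := by
      apply Real.log_le_log (by exact_mod_cast hn) (by push_cast; linarith)
    push_cast at h2 ⊢
    linarith
  have h2 : ((harmonic n : ℚ) : ℝ) ≤ 1 + Real.log n := harmonic_le_one_add_log n
  rw [e, abs_le]; constructor <;> linarith

set_option maxHeartbeats 1000000 in
lemma main_est (M : ℝ) (hM : 0 ≤ M) :
    ∃ D : ℝ, 0 < D ∧ ∀ n : ℕ, 1 ≤ n → ∀ u : ℝ, |u| ≤ M →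
      |(∑ k ∈ Finset.Icc 1 n, Complex.normSq (lubinskyPsi k u)) - (1/4 + u^2)*Real.log n| ≤ D := by
  classical
  set m : ℕ := ⌈M⌉₊ + 2 with hm
  set C : ℝ := 1 + 9*M^2 + 2*M^4 with hC
  set B : ℝ := (m:ℝ)*(4*(m:ℝ) + 1 + M^2) with hB
  refine ⟨1 + B + C + (1/4+M^2)*2, by positivity, ?_⟩
  intro n hn u hu
  have hu2 : u^2 ≤ M^2 := by nlinarith [sq_abs u, abs_nonneg u]
  -- split off k = 1
  have hmem : 1 ∈ Finset.Icc 1 n := Finset.mem_Icc.mpr ⟨le_refl 1, hn⟩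
  have herase : (Finset.Icc 1 n).erase 1 = Finset.Icc 2 n := by
    ext a; simp only [Finset.mem_erase, Finset.mem_Icc]; omega
  have hsplit : (∑ k ∈ Finset.Icc 1 n, Complex.normSq (lubinskyPsi k u))
      = (∑ k ∈ Finset.Icc 2 n, Complex.normSq (lubinskyPsi k u)) + 1 := by
    rw [← Finset.sum_erase_add _ _ hmem, herase, normSq_psi_one]
  -- harmonic split
  have hH : (∑ k ∈ Finset.Icc 2 n, (1/4+u^2)/(k:ℝ))
      = (1/4+u^2) * ((∑ k ∈ Finset.Icc 1 n, 1/((k:ℝ))) - 1) := by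
    have h1 : (∑ k ∈ Finset.Icc 1 n, 1/((k:ℝ)))
        = (∑ k ∈ Finset.Icc 2 n, 1/((k:ℝ))) + 1 := by
      rw [← Finset.sum_erase_add _ _ hmem, herase]; norm_num
    rw [h1, show (∑ k ∈ Finset.Icc 2 n, 1/((k:ℝ))) + 1 - 1
      = ∑ k ∈ Finset.Icc 2 n, 1/((k:ℝ)) by ring, Finset.mul_sum]
    exact Finset.sum_congr rfl fun k _ => by rw [mul_one_div]
  -- the error sum
  have hdiff : (∑ k ∈ Finset.Icc 2 n, Complex.normSq (lubinskyPsi k u))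
      = (∑ k ∈ Finset.Icc 2 n, (Complex.normSq (lubinskyPsi k u) - (1/4+u^2)/(k:ℝ)))
        + (∑ k ∈ Finset.Icc 2 n, (1/4+u^2)/(k:ℝ)) := by
    rw [← Finset.sum_add_distrib]; exact Finset.sum_congr rfl fun k _ => by ring
  -- bound the error sum
  have herr : |∑ k ∈ Finset.Icc 2 n, (Complex.normSq (lubinskyPsi k u) - (1/4+u^2)/(k:ℝ))|
      ≤ B + C := by
    refine le_trans (Finset.abs_sum_le_sum_abs _ _) ?_
    rw [← Finset.sum_filter_add_sum_filter_not (Finset.Icc 2 n) (fun k => k ≤ m)]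
    have hcrude : (∑ k ∈ (Finset.Icc 2 n).filter (fun k => k ≤ m),
          |Complex.normSq (lubinskyPsi k u) - (1/4+u^2)/(k:ℝ)|) ≤ B := by
      have hsub : (Finset.Icc 2 n).filter (fun k => k ≤ m) ⊆ Finset.Icc 2 m := by
        intro a ha
        simp only [Finset.mem_filter, Finset.mem_Icc] at ha ⊢
        omega
      refine le_trans (Finset.sum_le_sum_of_subset_of_nonneg hsub
        (fun k _ _ => abs_nonneg _)) ?_
      have hterm : ∀ k ∈ Finset.Icc 2 m,
          |Complex.normSq (lubinskyPsi k u) - (1/4+u^2)/(k:ℝ)| ≤ 4*(m:ℝ) + 1 + M^2 := by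
        intro k hk
        obtain ⟨hk2, hkm⟩ := Finset.mem_Icc.mp hk
        have hk1 : (1:ℝ) ≤ (k:ℝ) := by exact_mod_cast Nat.one_le_of_lt hk2
        have h1 : (0:ℝ) ≤ Complex.normSq (lubinskyPsi k u) := Complex.normSq_nonneg _
        have h2 : (0:ℝ) ≤ (1/4+u^2)/(k:ℝ) := by positivity
        have h3 : (1/4+u^2)/(k:ℝ) ≤ 1/4+u^2 := div_le_self (by positivity) hk1
        have h4 := per_term_crude u hk2
        have h5 : (4:ℝ)*(k:ℝ) ≤ 4*(m:ℝ) := by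
          have : (k:ℝ) ≤ (m:ℝ) := by exact_mod_cast hkm
          linarith
        rw [abs_sub_le_iff]; constructor <;> nlinarith [hu2]
      refine le_trans (Finset.sum_le_sum hterm) ?_
      rw [Finset.sum_const, nsmul_eq_mul, hB]
      have hcard : ((Finset.Icc 2 m).card : ℝ) ≤ (m:ℝ) := by
        rw [Nat.card_Icc]
        have h : m + 1 - 2 ≤ m := by omega
        exact_mod_cast h
      exact mul_le_mul_of_nonneg_right hcard (by positivity)
    have hfine : (∑ k ∈ (Finset.Icc 2 n).filter (fun k => ¬ k ≤ m),
          |Complex.normSq (lubinskyPsi k u) - (1/4+u^2)/(k:ℝ)|) ≤ C := by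
      have hterm : ∀ k ∈ (Finset.Icc 2 n).filter (fun k => ¬ k ≤ m),
          |Complex.normSq (lubinskyPsi k u) - (1/4+u^2)/(k:ℝ)| ≤ C*(1/((k:ℝ))^2) := by
        intro k hk
        simp only [Finset.mem_filter, Finset.mem_Icc, not_le] at hk
        have hkM : M + 2 ≤ (k:ℝ) := by
          have h1 : (m:ℝ) + 1 ≤ (k:ℝ) := by exact_mod_cast hk.2
          have h2 : M ≤ (⌈M⌉₊ : ℝ) := Nat.le_ceil M
          have h3 : (m:ℝ) = (⌈M⌉₊ : ℝ) + 2 := by rw [hm]; push_cast; ring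
          linarith
        have := per_term_fine M u hM hu k hkM
        rw [hC]; rw [mul_one_div]; exact this
      refine le_trans (Finset.sum_le_sum hterm) ?_
      rw [← Finset.mul_sum]
      have hsub : (Finset.Icc 2 n).filter (fun k => ¬ k ≤ m) ⊆ Finset.Icc 2 n :=
        Finset.filter_subset _ _
      have h2 : (∑ k ∈ (Finset.Icc 2 n).filter (fun k => ¬ k ≤ m), 1/((k:ℝ))^2)
          ≤ ∑ k ∈ Finset.Icc 2 n, 1/((k:ℝ))^2 :=
        Finset.sum_le_sum_of_subset_of_nonneg hsub (fun k _ _ => by positivity)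
      have h3 := sum_inv_sq_le n
      have hC0 : (0:ℝ) ≤ C := by rw [hC]; positivity
      calc C * (∑ k ∈ (Finset.Icc 2 n).filter (fun k => ¬ k ≤ m), 1/((k:ℝ))^2)
          ≤ C * 1 := mul_le_mul_of_nonneg_left (le_trans h2 h3) hC0
        _ = C := mul_one C
    linarith [hcrude, hfine]
  -- harmonic bound
  have hHb := harmonic_sum_bound hn
  -- assemble
  rw [hsplit, hdiff, hH]
  have hmul : |(1/4+u^2) * ((∑ k ∈ Finset.Icc 1 n, 1/((k:ℝ))) - 1 - Real.log n)|
      ≤ (1/4+M^2)*2 := by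
    rw [abs_mul, abs_of_nonneg (by positivity : (0:ℝ) ≤ 1/4+u^2)]
    have h1 : |(∑ k ∈ Finset.Icc 1 n, 1/((k:ℝ))) - 1 - Real.log n| ≤ 2 := by
      have := abs_sub_abs_le_abs_sub ((∑ k ∈ Finset.Icc 1 n, 1/((k:ℝ))) - 1 - Real.log n)
        ((∑ k ∈ Finset.Icc 1 n, 1/((k:ℝ))) - Real.log n)
      have h2 : |(∑ k ∈ Finset.Icc 1 n, 1/((k:ℝ))) - 1 - Real.log n
          - ((∑ k ∈ Finset.Icc 1 n, 1/((k:ℝ))) - Real.log n)| = 1 := by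
        rw [show (∑ k ∈ Finset.Icc 1 n, 1/((k:ℝ))) - 1 - Real.log n
          - ((∑ k ∈ Finset.Icc 1 n, 1/((k:ℝ))) - Real.log n) = -1 by ring]
        norm_num
      linarith [hHb, this, h2]
    have h0 : (0:ℝ) ≤ 1/4 + u^2 := by positivity
    calc (1/4+u^2) * |(∑ k ∈ Finset.Icc 1 n, 1/((k:ℝ))) - 1 - Real.log n|
        ≤ (1/4+u^2) * 2 := mul_le_mul_of_nonneg_left h1 h0
      _ ≤ (1/4+M^2)*2 := by nlinarith [hu2]
  have hgoal : (∑ k ∈ Finset.Icc 2 n, (Complex.normSq (lubinskyPsi k u) - (1/4+u^2)/(k:ℝ)))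
        + (1/4+u^2) * ((∑ k ∈ Finset.Icc 1 n, 1/((k:ℝ))) - 1) + 1 - (1/4+u^2)*Real.log n
      = (∑ k ∈ Finset.Icc 2 n, (Complex.normSq (lubinskyPsi k u) - (1/4+u^2)/(k:ℝ)))
        + 1 + (1/4+u^2) * ((∑ k ∈ Finset.Icc 1 n, 1/((k:ℝ))) - 1 - Real.log n) := by ring
  rw [hgoal]
  have htri := abs_add_le ((∑ k ∈ Finset.Icc 2 n, (Complex.normSq (lubinskyPsi k u) - (1/4+u^2)/(k:ℝ))) + 1)
    ((1/4+u^2) * ((∑ k ∈ Finset.Icc 1 n, 1/((k:ℝ))) - 1 - Real.log n))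
  have htri2 := abs_add_le (∑ k ∈ Finset.Icc 2 n, (Complex.normSq (lubinskyPsi k u) - (1/4+u^2)/(k:ℝ))) 1
  have h1 : |(1:ℝ)| = 1 := abs_one
  linarith [herr, hmul, htri, htri2]

theorem lubinskyKernel_diagonal_asymptotics (K : Set ℝ) (hK : IsCompact K) :
    TendstoUniformlyOn (fun (n : ℕ) (u : ℝ) => lubinskyKernel n u u / (Real.log n : ℂ))
      (fun u : ℝ => ((1/4 : ℝ) + u ^ 2 : ℝ)) atTop K := by
  obtain ⟨M0, hM0⟩ := (isBounded_iff_forall_norm_le.mp hK.isBounded)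
  set M : ℝ := max M0 0 with hMdef
  have hM : 0 ≤ M := le_max_right _ _
  have hMK : ∀ u ∈ K, |u| ≤ M := fun u hu => le_trans (hM0 u hu) (le_max_left _ _)
  obtain ⟨D, hD0, hD⟩ := main_est M hM
  rw [Metric.tendstoUniformlyOn_iff]
  intro ε hε
  have hlim : Tendsto (fun n : ℕ => D / Real.log n) atTop (nhds 0) := by
    apply Tendsto.div_atTop (tendsto_const_nhds)
    exact Real.tendsto_log_atTop.comp tendsto_natCast_atTop_atTop
  have h1 : ∀ᶠ n : ℕ in atTop, D / Real.log n < ε := hlim.eventually_lt_const hε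
  filter_upwards [h1, eventually_ge_atTop 2] with n hn1 hn2 u huK
  -- rewrite kernel as real sum
  have hker : lubinskyKernel n u u
      = (((∑ k ∈ Finset.Icc 1 n, Complex.normSq (lubinskyPsi k u)) : ℝ) : ℂ) := by
    unfold lubinskyKernel
    rw [Complex.ofReal_sum]
    exact Finset.sum_congr rfl fun k _ => (Complex.mul_conj _)
  have hlog : 0 < Real.log n :=
    Real.log_pos (by exact_mod_cast Nat.lt_of_lt_of_le one_lt_two hn2)
  set S : ℝ := ∑ k ∈ Finset.Icc 1 n, Complex.normSq (lubinskyPsi k u) with hS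
  have hdistrw : dist (((1/4 : ℝ) + u ^ 2 : ℝ) : ℂ) (lubinskyKernel n u u / (Real.log n : ℂ))
      = |((1/4 : ℝ) + u ^ 2) - S / Real.log n| := by
    rw [hker, show ((S : ℂ) / (Real.log n : ℂ)) = ((S / Real.log n : ℝ) : ℂ) from
      (Complex.ofReal_div _ _).symm, Complex.dist_eq, ← Complex.ofReal_sub,
      Complex.norm_real, Real.norm_eq_abs]
  rw [hdistrw]
  have hest := hD n (by omega) u (hMK u huK)
  have heq : ((1/4 : ℝ) + u ^ 2) - S / Real.log n
      = -((S - (1/4 + u^2)*Real.log n) / Real.log n) := by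
    field_simp; ring
  rw [heq, abs_neg, abs_div, abs_of_pos hlog]
  calc |S - (1/4 + u^2)*Real.log n| / Real.log n ≤ D / Real.log n := by
        exact div_le_div_of_nonneg_right hest hlog.le
    _ < ε := hn1
end

section
/- Let t_1, \ldots, t_l be distinct real numbers and let H_n = (K_n(t_i, t_j))_{i,j=1}^l, where K_n is the Lubinsky kernel K_n(u,v) = \sum_{k=1}^n \psi_k(u)\overline{\psi_k(v)} with \psi_1 = 1, \psi_k(t) = k^{1/2-it} - (k-1)^{1/2-it}. Then \det H_n / (\log n)^l \to \prod_{j=1}^l |1/2 + it_j|^2 as n \to \infty; in particular H_n is nonsingular for all sufficiently large n. -/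
open Filter Topology

open Complex Finset

noncomputable def ee (u : ℝ) : ℂ := 1/2 - Complex.I * u

lemma ee_re (u : ℝ) : (ee u).re = 1/2 := by simp [ee]

lemma ee_add_ee (u v : ℝ) : ee u + ee (-v) - 1 = -Complex.I * (u - v) := by
  simp only [ee]; push_cast; ring

lemma ee_mul_ee (u : ℝ) : ee u * ee (-u) = ((1/4 + u^2 : ℝ) : ℂ) := by
  have h : ee u * ee (-u) = 1/4 - Complex.I^2 * u^2 := by simp only [ee]; push_cast; ring
  rw [h, Complex.I_sq]; push_cast; ring

lemma ee_ne_of_ne {u v : ℝ} (h : u ≠ v) : ee u + ee (-v) - 1 ≠ 0 := by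
  rw [ee_add_ee]
  simp [Complex.ext_iff, sub_eq_zero, h]

lemma norm_ee_add_ee {u v : ℝ} : ‖ee u + ee (-v) - 1‖ = |u - v| := by
  rw [ee_add_ee]
  rw [show -Complex.I * ((u:ℂ) - v) = -(Complex.I * ((u - v : ℝ):ℂ)) by push_cast; ring]
  rw [norm_neg, norm_mul, Complex.norm_I, one_mul, Complex.norm_real, Real.norm_eq_abs]

lemma hasDerivAt_cpow_real (c : ℂ) {x : ℝ} (hx : 0 < x) :
    HasDerivAt (fun y : ℝ => (y:ℂ) ^ c) (c * (x:ℂ) ^ (c-1)) x := by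
  have h1 : HasDerivAt (fun z : ℂ => z ^ c) (c * (x:ℂ) ^ (c-1) * 1) (x:ℝ) :=
    HasDerivAt.cpow_const (hasDerivAt_id _) (Complex.ofReal_mem_slitPlane.2 hx)
  simpa using h1.comp_ofReal

lemma norm_cpow_real {x : ℝ} (hx : 0 < x) (c : ℂ) : ‖(x:ℂ) ^ c‖ = x ^ c.re := by
  rw [Complex.norm_cpow_eq_rpow_re_of_pos hx]

lemma cpow_sub_cpow_le (c : ℂ) (hc : c.re ≤ 1) {a b : ℝ} (ha : 1 ≤ a) (hab : a ≤ b) :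
    ‖(b:ℂ) ^ c - (a:ℂ) ^ c‖ ≤ ‖c‖ * a ^ (c.re - 1) * (b - a) := by
  have hderiv : ∀ x ∈ Set.Icc a b,
      HasDerivWithinAt (fun y : ℝ => (y:ℂ) ^ c) (c * (x:ℂ) ^ (c-1)) (Set.Icc a b) x :=
    fun x hx => (hasDerivAt_cpow_real c (by linarith [hx.1])).hasDerivWithinAt
  have hbound : ∀ x ∈ Set.Icc a b, ‖c * (x:ℂ) ^ (c-1)‖ ≤ ‖c‖ * a ^ (c.re - 1) := by
    intro x hx
    have hx0 : (0:ℝ) < x := by linarith [hx.1]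
    rw [norm_mul, norm_cpow_real hx0]
    have hre : (c-1).re = c.re - 1 := by simp
    rw [hre]
    exact mul_le_mul_of_nonneg_left
      (Real.rpow_le_rpow_of_nonpos (by linarith) hx.1 (by linarith)) (norm_nonneg c)
  have h := Convex.norm_image_sub_le_of_norm_hasDerivWithin_le hderiv hbound (convex_Icc a b)
    (Set.left_mem_Icc.2 hab) (Set.right_mem_Icc.2 hab)
  calc ‖(b:ℂ) ^ c - (a:ℂ) ^ c‖ ≤ ‖c‖ * a ^ (c.re - 1) * ‖b - a‖ := h
  _ = ‖c‖ * a ^ (c.re - 1) * (b - a) := by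
      rw [Real.norm_eq_abs, _root_.abs_of_nonneg (by linarith)]

/-- Second order approximation: `(a+1)^c - a^c ≈ c (a+1)^(c-1)`. -/
lemma cpow_second_approx (c : ℂ) (hc : c.re ≤ 2) {a : ℝ} (ha : 1 ≤ a) :
    ‖((a+1:ℝ):ℂ) ^ c - (a:ℂ) ^ c - c * ((a+1:ℝ):ℂ) ^ (c-1)‖
      ≤ ‖c‖ * ‖c-1‖ * a ^ (c.re - 2) := by
  set g : ℝ → ℂ := fun x => (x:ℂ) ^ c - c * ((a+1:ℝ):ℂ) ^ (c-1) * x with hg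
  have hderiv : ∀ x ∈ Set.Icc a (a+1),
      HasDerivWithinAt g (c * (x:ℂ) ^ (c-1) - c * ((a+1:ℝ):ℂ) ^ (c-1)) (Set.Icc a (a+1)) x := by
    intro x hx
    have h1 := (hasDerivAt_cpow_real c (show (0:ℝ) < x by linarith [hx.1]))
    have h2 : HasDerivAt (fun y : ℝ => c * ((a+1:ℝ):ℂ) ^ (c-1) * (y:ℂ))
        (c * ((a+1:ℝ):ℂ) ^ (c-1)) x := by
      simpa using (Complex.ofRealCLM.hasDerivAt (x := x)).const_mul (c * ((a+1:ℝ):ℂ) ^ (c-1))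
    exact ((h1.sub h2)).hasDerivWithinAt
  have hbound : ∀ x ∈ Set.Icc a (a+1),
      ‖c * (x:ℂ) ^ (c-1) - c * ((a+1:ℝ):ℂ) ^ (c-1)‖ ≤ ‖c‖ * ‖c-1‖ * a ^ (c.re - 2) := by
    intro x hx
    have hx1 : (1:ℝ) ≤ x := by linarith [hx.1]
    have h3 : ‖c * (x:ℂ) ^ (c-1) - c * ((a+1:ℝ):ℂ) ^ (c-1)‖
        = ‖c‖ * ‖((a+1:ℝ):ℂ) ^ (c-1) - (x:ℂ) ^ (c-1)‖ := by
      rw [← norm_neg, ← norm_mul]; congr 1; ring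
    rw [h3]
    have h4 := cpow_sub_cpow_le (c-1) (by simp; linarith) hx1 (show x ≤ a+1 by linarith [hx.2])
    have h5 : ‖c-1‖ * x ^ ((c-1).re - 1) * (a+1-x) ≤ ‖c-1‖ * a ^ (c.re - 2) := by
      have hre : (c-1).re - 1 = c.re - 2 := by simp; ring
      rw [hre]
      have h6 : x ^ (c.re-2) ≤ a ^ (c.re-2) :=
        Real.rpow_le_rpow_of_nonpos (by linarith) hx.1 (by linarith)
      have h7 : a + 1 - x ≤ 1 := by linarith [hx.1]
      have h8 : (0:ℝ) ≤ a + 1 - x := by linarith [hx.2]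
      calc ‖c-1‖ * x ^ (c.re-2) * (a+1-x) ≤ ‖c-1‖ * a ^ (c.re-2) * 1 := by
            apply mul_le_mul (mul_le_mul_of_nonneg_left h6 (norm_nonneg _)) h7 h8
            positivity
      _ = ‖c-1‖ * a ^ (c.re-2) := mul_one _
    calc ‖c‖ * ‖((a+1:ℝ):ℂ) ^ (c-1) - (x:ℂ) ^ (c-1)‖
        ≤ ‖c‖ * (‖c-1‖ * x ^ ((c-1).re - 1) * (a+1-x)) :=
          mul_le_mul_of_nonneg_left h4 (norm_nonneg _)
    _ ≤ ‖c‖ * (‖c-1‖ * a ^ (c.re - 2)) := mul_le_mul_of_nonneg_left h5 (norm_nonneg _)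
    _ = ‖c‖ * ‖c-1‖ * a ^ (c.re - 2) := by ring
  have h := Convex.norm_image_sub_le_of_norm_hasDerivWithin_le hderiv hbound
    (convex_Icc a (a+1)) (Set.left_mem_Icc.2 (by linarith)) (Set.right_mem_Icc.2 (by linarith))
  have he : g (a+1) - g a = ((a+1:ℝ):ℂ) ^ c - (a:ℂ) ^ c - c * ((a+1:ℝ):ℂ) ^ (c-1) := by
    simp only [hg]; push_cast; ring
  rw [he] at h
  simpa using h


lemma psi_eq {k : ℕ} (hk : 2 ≤ k) (u : ℝ) :
    lubinskyPsi k u = (k:ℂ) ^ (ee u) - ((((k:ℝ)-1 : ℝ)):ℂ) ^ (ee u) := by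
  rw [lubinskyPsi, if_neg (by omega)]
  push_cast
  rfl

lemma conj_psi (k : ℕ) (v : ℝ) : (starRingEnd ℂ) (lubinskyPsi k v) = lubinskyPsi k (-v) := by
  rcases le_or_gt k 1 with hk | hk
  · rw [lubinskyPsi, if_pos hk, lubinskyPsi, if_pos hk, map_one]
  · have hk2 : 2 ≤ k := hk
    rw [psi_eq hk2 v, psi_eq hk2 (-v), map_sub]
    have hconj : (starRingEnd ℂ) (ee v) = ee (-v) := by
      simp [ee, Complex.ext_iff]
    have h1 : (starRingEnd ℂ) ((k:ℂ) ^ (ee v)) = (k:ℂ) ^ (ee (-v)) := by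
      rw [← hconj, Complex.cpow_conj _ _ (by
        rw [Complex.natCast_arg]; exact Real.pi_ne_zero.symm), map_natCast]
    have hpos : (0:ℝ) < (k:ℝ) - 1 := by
      have : (2:ℝ) ≤ (k:ℝ) := by exact_mod_cast hk2
      linarith
    have h2 : (starRingEnd ℂ) (((((k:ℝ)-1 : ℝ)):ℂ) ^ (ee v))
        = (((((k:ℝ)-1 : ℝ)):ℂ)) ^ (ee (-v)) := by
      rw [← hconj, Complex.cpow_conj _ _ (by
        rw [Complex.arg_ofReal_of_nonneg hpos.le]; exact Real.pi_ne_zero.symm),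
        Complex.conj_ofReal]
    rw [h1, h2]

lemma psi_approx (u : ℝ) {k : ℕ} (hk : 2 ≤ k) :
    ‖lubinskyPsi k u - ee u * (k:ℂ) ^ (ee u - 1)‖
      ≤ ‖ee u‖ * ‖ee u - 1‖ * ((k:ℝ)-1) ^ (-(3/2) : ℝ) := by
  have ha : (1:ℝ) ≤ (k:ℝ) - 1 := by
    have : (2:ℝ) ≤ (k:ℝ) := by exact_mod_cast hk
    linarith
  have h := cpow_second_approx (ee u) (by rw [ee_re]; norm_num) ha
  have e1 : (((k:ℝ)-1) + 1 : ℝ) = (k:ℝ) := by ring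
  rw [e1, ee_re] at h
  rw [psi_eq hk u]
  have e2 : ((1:ℝ)/2 - 2 : ℝ) = -(3/2) := by norm_num
  rw [e2] at h
  convert h using 2
  rw [Complex.ofReal_natCast]

lemma norm_main_le (u : ℝ) {k : ℕ} (hk : 1 ≤ k) :
    ‖ee u * (k:ℂ) ^ (ee u - 1)‖ ≤ ‖ee u‖ := by
  have hk0 : (0:ℝ) < (k:ℝ) := by exact_mod_cast hk
  have h : ‖((k:ℝ):ℂ) ^ (ee u - 1)‖ = (k:ℝ) ^ ((ee u - 1).re) := norm_cpow_real hk0 _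
  have hre : (ee u - 1).re = -(1/2) := by simp [ee_re]; norm_num
  rw [norm_mul]
  have h2 : ‖(k:ℂ) ^ (ee u - 1)‖ ≤ 1 := by
    rw [show ((k:ℕ):ℂ) = (((k:ℝ)):ℂ) by push_cast; rfl, h, hre]
    exact Real.rpow_le_one_of_one_le_of_nonpos (by exact_mod_cast hk) (by norm_num)
  calc ‖ee u‖ * ‖(k:ℂ) ^ (ee u - 1)‖ ≤ ‖ee u‖ * 1 :=
        mul_le_mul_of_nonneg_left h2 (norm_nonneg _)
  _ = ‖ee u‖ := mul_one _

noncomputable def psiC (u : ℝ) : ℝ := ‖ee u‖ * ‖ee u - 1‖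

lemma psiC_nonneg (u : ℝ) : 0 ≤ psiC u := mul_nonneg (norm_nonneg _) (norm_nonneg _)

noncomputable def prodC (u v : ℝ) : ℝ :=
  ‖ee u‖ * psiC (-v) + psiC u * ‖ee (-v)‖ + psiC u * psiC (-v)

lemma prod_approx (u v : ℝ) {k : ℕ} (hk : 2 ≤ k) :
    ‖lubinskyPsi k u * lubinskyPsi k (-v) - ee u * ee (-v) * (k:ℂ) ^ (ee u + ee (-v) - 2)‖
      ≤ prodC u v * ((k:ℝ)-1) ^ (-(3/2) : ℝ) := by
  have ha : (1:ℝ) ≤ (k:ℝ) - 1 := by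
    have : (2:ℝ) ≤ (k:ℝ) := by exact_mod_cast hk
    linarith
  set w : ℝ := ((k:ℝ)-1) ^ (-(3/2) : ℝ) with hw
  have hw0 : 0 ≤ w := Real.rpow_nonneg (by linarith) _
  have hw1 : w ≤ 1 := Real.rpow_le_one_of_one_le_of_nonpos ha (by norm_num)
  set P : ℂ := ee u * (k:ℂ) ^ (ee u - 1) with hP
  set Q : ℂ := ee (-v) * (k:ℂ) ^ (ee (-v) - 1) with hQ
  set eps : ℂ := lubinskyPsi k u - P with heps
  set eps' : ℂ := lubinskyPsi k (-v) - Q with heps'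
  have hek : ‖eps‖ ≤ psiC u * w := psi_approx u hk
  have hek' : ‖eps'‖ ≤ psiC (-v) * w := psi_approx (-v) hk
  have hPn : ‖P‖ ≤ ‖ee u‖ := norm_main_le u (by omega)
  have hQn : ‖Q‖ ≤ ‖ee (-v)‖ := norm_main_le (-v) (by omega)
  have hkne : ((k:ℕ):ℂ) ≠ 0 := by
    exact_mod_cast Nat.cast_ne_zero.2 (by omega)
  have hPQ : P * Q = ee u * ee (-v) * (k:ℂ) ^ (ee u + ee (-v) - 2) := by
    rw [hP, hQ, show ee u + ee (-v) - 2 = (ee u - 1) + (ee (-v) - 1) by ring,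
      Complex.cpow_add _ _ hkne]
    ring
  have hsplit : lubinskyPsi k u * lubinskyPsi k (-v) - ee u * ee (-v) * (k:ℂ) ^ (ee u + ee (-v) - 2)
      = P * eps' + eps * Q + eps * eps' := by
    rw [← hPQ, heps, heps']; ring
  rw [hsplit]
  calc ‖P * eps' + eps * Q + eps * eps'‖
      ≤ ‖P * eps' + eps * Q‖ + ‖eps * eps'‖ := norm_add_le _ _
  _ ≤ (‖P * eps'‖ + ‖eps * Q‖) + ‖eps * eps'‖ := by
      exact add_le_add_left (norm_add_le _ _) _
  _ ≤ (‖ee u‖ * (psiC (-v) * w) + (psiC u * w) * ‖ee (-v)‖) + (psiC u * w) * (psiC (-v) * w) := by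
      have b1 : ‖P * eps'‖ ≤ ‖ee u‖ * (psiC (-v) * w) := by
        rw [norm_mul]; exact mul_le_mul hPn hek' (norm_nonneg _) (norm_nonneg _)
      have b2 : ‖eps * Q‖ ≤ (psiC u * w) * ‖ee (-v)‖ := by
        rw [norm_mul]
        exact mul_le_mul hek hQn (norm_nonneg _) (mul_nonneg (psiC_nonneg u) hw0)
      have b3 : ‖eps * eps'‖ ≤ (psiC u * w) * (psiC (-v) * w) := by
        rw [norm_mul]
        exact mul_le_mul hek hek' (norm_nonneg _) (mul_nonneg (psiC_nonneg u) hw0)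
      exact add_le_add (add_le_add b1 b2) b3
  _ ≤ prodC u v * w := by
      rw [prodC]
      have h1 : (psiC u * w) * (psiC (-v) * w) ≤ (psiC u * psiC (-v)) * w := by
        have := mul_le_of_le_one_right (mul_nonneg (mul_nonneg (psiC_nonneg u) hw0) (psiC_nonneg (-v))) hw1
        nlinarith [psiC_nonneg u, psiC_nonneg (-v)]
      nlinarith [psiC_nonneg u, psiC_nonneg (-v), norm_nonneg (ee u), norm_nonneg (ee (-v))]

lemma sum_split (f : ℕ → ℂ) {n : ℕ} (hn : 1 ≤ n) :
    ∑ k ∈ Finset.Icc 1 n, f k = f 1 + ∑ k ∈ Finset.Icc 2 n, f k := by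
  have h : Finset.Icc 1 n = insert 1 (Finset.Icc 2 n) := by
    ext x
    simp only [Finset.mem_Icc, Finset.mem_insert]
    omega
  rw [h, Finset.sum_insert (by simp)]

lemma telescope (f : ℕ → ℂ) {n : ℕ} (hn : 1 ≤ n) :
    ∑ k ∈ Finset.Icc 2 n, (f k - f (k-1)) = f n - f 1 := by
  induction n, hn using Nat.le_induction with
  | base => simp
  | succ n hn ih =>
    rw [Finset.sum_Icc_succ_top (by omega), ih]
    simp

lemma exists_sum_shift_bound (p : ℝ) (hp : p < -1) :
    ∃ T : ℝ, 0 ≤ T ∧ ∀ n : ℕ, ∑ k ∈ Finset.Icc 2 n, ((k:ℝ)-1) ^ p ≤ T := by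
  set g : ℕ → ℝ := fun k => ((k-1:ℕ):ℝ) ^ p with hg
  have hgsum : Summable g := by
    rw [← summable_nat_add_iff 1]
    simpa [hg] using Real.summable_nat_rpow.2 hp
  refine ⟨∑' k, g k, tsum_nonneg (fun k => Real.rpow_nonneg (Nat.cast_nonneg _) _), fun n => ?_⟩
  have he : ∑ k ∈ Finset.Icc 2 n, ((k:ℝ)-1) ^ p = ∑ k ∈ Finset.Icc 2 n, g k := by
    apply Finset.sum_congr rfl
    intro k hk
    have hk1 : 1 ≤ k := by simp at hk; omega
    rw [hg]
    congr 1
    push_cast [Nat.cast_sub hk1]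
    ring
  rw [he]
  exact hgsum.sum_le_tsum _ (fun k _ => Real.rpow_nonneg (Nat.cast_nonneg _) _)

lemma kernel_eq (n : ℕ) (u v : ℝ) :
    lubinskyKernel n u v = ∑ k ∈ Finset.Icc 1 n, lubinskyPsi k u * lubinskyPsi k (-v) := by
  simp [lubinskyKernel, conj_psi]

lemma harm_abs (n : ℕ) (hn : 1 ≤ n) : |(harmonic n : ℝ) - Real.log n| ≤ 1 := by
  have h1 : Real.log n ≤ (harmonic n : ℝ) := by
    calc Real.log n ≤ Real.log ((n:ℝ)+1) := by
          apply Real.log_le_log (by exact_mod_cast hn)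
          linarith
    _ ≤ (harmonic n : ℝ) := by
          have := log_add_one_le_harmonic n
          push_cast at this ⊢
          convert this using 2
  have h2 : (harmonic n : ℝ) ≤ 1 + Real.log n := harmonic_le_one_add_log n
  rw [abs_le]
  constructor <;> linarith

lemma diag_bound (u : ℝ) : ∃ C : ℝ, ∀ n : ℕ, 1 ≤ n →
    ‖lubinskyKernel n u u - ((1/4 + u^2 : ℝ):ℂ) * ((Real.log n : ℝ):ℂ)‖ ≤ C := by
  obtain ⟨T, hT0, hT⟩ := exists_sum_shift_bound (-(3/2)) (by norm_num)
  set A : ℂ := ((1/4 + u^2 : ℝ):ℂ) with hA'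
  have hA : A = ee u * ee (-u) := (ee_mul_ee u).symm
  refine ⟨‖1 - A‖ + prodC u u * T + ‖A‖, fun n hn => ?_⟩
  set f : ℕ → ℂ := fun k => lubinskyPsi k u * lubinskyPsi k (-u) - A * ((k:ℂ))⁻¹ with hf
  have hharm : A * ((harmonic n : ℝ):ℂ) = ∑ k ∈ Finset.Icc 1 n, A * ((k:ℂ))⁻¹ := by
    rw [← Finset.mul_sum]
    congr 1
    rw [harmonic_eq_sum_Icc]
    push_cast
    rfl
  have hdiff : lubinskyKernel n u u - A * ((harmonic n : ℝ):ℂ) = ∑ k ∈ Finset.Icc 1 n, f k := by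
    rw [kernel_eq, hharm, ← Finset.sum_sub_distrib]
  have hf1 : f 1 = 1 - A := by
    simp [hf, lubinskyPsi]
  have hfk : ∀ k ∈ Finset.Icc 2 n, ‖f k‖ ≤ prodC u u * ((k:ℝ)-1) ^ (-(3/2) : ℝ) := by
    intro k hk
    have hk2 : 2 ≤ k := (Finset.mem_Icc.1 hk).1
    have hsum : ee u + ee (-u) - 2 = (-1 : ℂ) := by
      have h0 := ee_add_ee u u
      simp at h0
      rw [show ee u + ee (-u) - 2 = (ee u + ee (-u) - 1) - 1 by ring, h0]
      ring
    have hAk : A * ((k:ℂ))⁻¹ = ee u * ee (-u) * (k:ℂ) ^ (ee u + ee (-u) - 2) := by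
      rw [hA, hsum, Complex.cpow_neg_one]
    rw [hf]
    simp only
    rw [hAk]
    exact prod_approx u u hk2
  have hkey : ‖∑ k ∈ Finset.Icc 1 n, f k‖ ≤ ‖1 - A‖ + prodC u u * T := by
    rw [sum_split f hn, hf1]
    calc ‖(1 - A) + ∑ k ∈ Finset.Icc 2 n, f k‖
        ≤ ‖1 - A‖ + ‖∑ k ∈ Finset.Icc 2 n, f k‖ := norm_add_le _ _
    _ ≤ ‖1 - A‖ + ∑ k ∈ Finset.Icc 2 n, ‖f k‖ := by
        exact add_le_add_right (norm_sum_le _ _) _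
    _ ≤ ‖1 - A‖ + ∑ k ∈ Finset.Icc 2 n, prodC u u * ((k:ℝ)-1) ^ (-(3/2) : ℝ) := by
        exact add_le_add_right (Finset.sum_le_sum hfk) _
    _ ≤ ‖1 - A‖ + prodC u u * T := by
        rw [← Finset.mul_sum]
        have hpC : 0 ≤ prodC u u := by
          have := psiC_nonneg u
          have := norm_nonneg (ee u)
          have := norm_nonneg (ee (-u))
          have := psiC_nonneg (-u)
          unfold prodC
          positivity
        exact add_le_add_right (mul_le_mul_of_nonneg_left (hT n) hpC) _
  calc ‖lubinskyKernel n u u - A * ((Real.log n : ℝ):ℂ)‖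
      ≤ ‖lubinskyKernel n u u - A * ((harmonic n : ℝ):ℂ)‖
        + ‖A * ((harmonic n : ℝ):ℂ) - A * ((Real.log n : ℝ):ℂ)‖ := by
        exact norm_sub_le_norm_sub_add_norm_sub _ _ _
  _ ≤ (‖1 - A‖ + prodC u u * T) + ‖A‖ := by
      apply add_le_add
      · rw [hdiff]; exact hkey
      · rw [← mul_sub, norm_mul]
        have : ‖((harmonic n : ℝ):ℂ) - ((Real.log n : ℝ):ℂ)‖ ≤ 1 := by
          rw [show ((harmonic n : ℝ):ℂ) - ((Real.log n : ℝ):ℂ)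
              = (((harmonic n : ℝ) - Real.log n : ℝ):ℂ) by push_cast; ring]
          rw [Complex.norm_real, Real.norm_eq_abs]
          exact harm_abs n hn
        calc ‖A‖ * ‖((harmonic n : ℝ):ℂ) - ((Real.log n : ℝ):ℂ)‖ ≤ ‖A‖ * 1 :=
              mul_le_mul_of_nonneg_left this (norm_nonneg _)
        _ = ‖A‖ := mul_one _
  _ = ‖1 - A‖ + prodC u u * T + ‖A‖ := by ring

lemma eta_bound (c : ℂ) (hre : c.re = 0) {k : ℕ} (hk : 2 ≤ k) :
    ‖(k:ℂ) ^ c - ((((k:ℝ)-1 : ℝ)):ℂ) ^ c - c * (k:ℂ) ^ (c-1)‖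
      ≤ ‖c‖ * ‖c-1‖ * ((k:ℝ)-1) ^ (-2 : ℝ) := by
  have ha : (1:ℝ) ≤ (k:ℝ) - 1 := by
    have : (2:ℝ) ≤ (k:ℝ) := by exact_mod_cast hk
    linarith
  have h := cpow_second_approx c (by rw [hre]; norm_num) ha
  have e1 : (((k:ℝ)-1) + 1 : ℝ) = (k:ℝ) := by ring
  rw [e1, hre] at h
  have e2 : ((0:ℝ) - 2 : ℝ) = -2 := by norm_num
  rw [e2] at h
  convert h using 2
  rw [Complex.ofReal_natCast]

lemma offdiag_bound (u v : ℝ) (huv : u ≠ v) :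
    ∃ C : ℝ, 0 ≤ C ∧ ∀ n : ℕ, ‖lubinskyKernel n u v‖ ≤ C := by
  obtain ⟨T1, hT10, hT1⟩ := exists_sum_shift_bound (-(3/2)) (by norm_num)
  obtain ⟨T2, hT20, hT2⟩ := exists_sum_shift_bound (-2) (by norm_num)
  set c : ℂ := ee u + ee (-v) - 1 with hc'
  have hc0 : c ≠ 0 := ee_ne_of_ne huv
  have hcn : 0 < ‖c‖ := norm_pos_iff.2 hc0
  have hcre : c.re = 0 := by
    rw [hc']
    simp [ee_re, Complex.sub_re, Complex.add_re]
    norm_num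
  have hpC : 0 ≤ prodC u v := by
    have := psiC_nonneg u
    have := psiC_nonneg (-v)
    have := norm_nonneg (ee u)
    have := norm_nonneg (ee (-v))
    unfold prodC
    positivity
  refine ⟨1 + prodC u v * T1 + ‖ee u * ee (-v)‖ * ((2 + ‖c‖ * ‖c-1‖ * T2) / ‖c‖), ?_, ?_⟩
  · positivity
  intro n
  rcases Nat.eq_zero_or_pos n with rfl | hn
  · simp [lubinskyKernel]
    positivity
  -- n ≥ 1
  rw [kernel_eq, sum_split _ hn]
  have h1 : lubinskyPsi 1 u * lubinskyPsi 1 (-v) = 1 := by simp [lubinskyPsi]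
  rw [h1]
  -- main decomposition on Icc 2 n
  set M : ℕ → ℂ := fun k => ee u * ee (-v) * (k:ℂ) ^ (ee u + ee (-v) - 2) with hM
  have hsplit : ∑ k ∈ Finset.Icc 2 n, lubinskyPsi k u * lubinskyPsi k (-v)
      = (∑ k ∈ Finset.Icc 2 n, (lubinskyPsi k u * lubinskyPsi k (-v) - M k))
        + ∑ k ∈ Finset.Icc 2 n, M k := by
    rw [← Finset.sum_add_distrib]
    apply Finset.sum_congr rfl
    intro k _
    ring
  have herr : ‖∑ k ∈ Finset.Icc 2 n, (lubinskyPsi k u * lubinskyPsi k (-v) - M k)‖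
      ≤ prodC u v * T1 := by
    calc ‖∑ k ∈ Finset.Icc 2 n, (lubinskyPsi k u * lubinskyPsi k (-v) - M k)‖
        ≤ ∑ k ∈ Finset.Icc 2 n, ‖lubinskyPsi k u * lubinskyPsi k (-v) - M k‖ := norm_sum_le _ _
    _ ≤ ∑ k ∈ Finset.Icc 2 n, prodC u v * ((k:ℝ)-1) ^ (-(3/2) : ℝ) := by
        apply Finset.sum_le_sum
        intro k hk
        exact prod_approx u v (Finset.mem_Icc.1 hk).1
    _ ≤ prodC u v * T1 := by
        rw [← Finset.mul_sum]
        exact mul_le_mul_of_nonneg_left (hT1 n) hpC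
  -- main term: S = ∑ k^(c-1)
  set S : ℂ := ∑ k ∈ Finset.Icc 2 n, (k:ℂ) ^ (c - 1) with hS
  have hmain : ∑ k ∈ Finset.Icc 2 n, M k = ee u * ee (-v) * S := by
    rw [hS, Finset.mul_sum]
    apply Finset.sum_congr rfl
    intro k _
    rw [hM]
    congr 2
    rw [hc']
    ring
  have hSbound : ‖S‖ ≤ (2 + ‖c‖ * ‖c-1‖ * T2) / ‖c‖ := by
    set g : ℕ → ℂ := fun k => ((k:ℝ):ℂ) ^ c with hg
    have hcS : c * S = (g n - g 1)
        - ∑ k ∈ Finset.Icc 2 n, ((k:ℂ) ^ c - ((((k:ℝ)-1:ℝ)):ℂ) ^ c - c * (k:ℂ) ^ (c-1)) := by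
      rw [← telescope g hn, hS, Finset.mul_sum, ← Finset.sum_sub_distrib]
      apply Finset.sum_congr rfl
      intro k hk
      have hk1 : 1 ≤ k := by have := (Finset.mem_Icc.1 hk).1; omega
      have hgk : g (k-1) = ((((k:ℝ)-1:ℝ)):ℂ) ^ c := by
        rw [hg]
        congr 2
        push_cast [Nat.cast_sub hk1]
        ring
      have hcast : (((k-1:ℕ):ℝ):ℂ) = ((((k:ℝ)-1:ℝ)):ℂ) := by
        push_cast [Nat.cast_sub hk1]
        ring
      simp only [hg]
      rw [hcast]
      push_cast
      ring
    have hnorm : ‖c * S‖ ≤ 2 + ‖c‖ * ‖c-1‖ * T2 := by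
      rw [hcS]
      have hg1 : g 1 = 1 := by simp [hg, Complex.one_cpow]
      have hgn : ‖g n‖ = 1 := by
        rw [hg, norm_cpow_real (by exact_mod_cast hn) c, hcre, Real.rpow_zero]
      calc ‖(g n - g 1) - _‖ ≤ ‖g n - g 1‖ + ‖∑ k ∈ Finset.Icc 2 n,
            ((k:ℂ) ^ c - ((((k:ℝ)-1:ℝ)):ℂ) ^ c - c * (k:ℂ) ^ (c-1))‖ := norm_sub_le _ _
      _ ≤ (‖g n‖ + ‖g 1‖) + ∑ k ∈ Finset.Icc 2 n,
            ‖(k:ℂ) ^ c - ((((k:ℝ)-1:ℝ)):ℂ) ^ c - c * (k:ℂ) ^ (c-1)‖ :=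
          add_le_add (norm_sub_le _ _) (norm_sum_le _ _)
      _ ≤ (1 + 1) + ∑ k ∈ Finset.Icc 2 n, ‖c‖ * ‖c-1‖ * ((k:ℝ)-1) ^ (-2:ℝ) := by
          apply add_le_add
          · rw [hgn, hg1]; norm_num
          · apply Finset.sum_le_sum
            intro k hk
            exact eta_bound c hcre (Finset.mem_Icc.1 hk).1
      _ ≤ 2 + ‖c‖ * ‖c-1‖ * T2 := by
          rw [← Finset.mul_sum]
          have : ∑ k ∈ Finset.Icc 2 n, ((k:ℝ)-1) ^ (-2:ℝ) ≤ T2 := hT2 n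
          have h0 : (0:ℝ) ≤ ‖c‖ * ‖c-1‖ := by positivity
          nlinarith [mul_le_mul_of_nonneg_left this h0]
    rw [le_div_iff₀ hcn]
    calc ‖S‖ * ‖c‖ = ‖c * S‖ := by rw [norm_mul, mul_comm]
    _ ≤ 2 + ‖c‖ * ‖c-1‖ * T2 := hnorm
  calc ‖1 + ((∑ k ∈ Finset.Icc 2 n, lubinskyPsi k u * lubinskyPsi k (-v)))‖
      ≤ 1 + ‖∑ k ∈ Finset.Icc 2 n, lubinskyPsi k u * lubinskyPsi k (-v)‖ := by
        calc ‖1 + _‖ ≤ ‖(1:ℂ)‖ + _ := norm_add_le _ _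
        _ = 1 + _ := by rw [norm_one]
  _ ≤ 1 + (prodC u v * T1 + ‖ee u * ee (-v)‖ * ((2 + ‖c‖ * ‖c-1‖ * T2) / ‖c‖)) := by
      apply add_le_add_right
      rw [hsplit, hmain]
      calc ‖_ + ee u * ee (-v) * S‖ ≤ ‖∑ k ∈ Finset.Icc 2 n,
            (lubinskyPsi k u * lubinskyPsi k (-v) - M k)‖ + ‖ee u * ee (-v) * S‖ :=
          norm_add_le _ _
      _ ≤ prodC u v * T1 + ‖ee u * ee (-v)‖ * ((2 + ‖c‖ * ‖c-1‖ * T2) / ‖c‖) := by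
          apply add_le_add herr
          rw [norm_mul]
          exact mul_le_mul_of_nonneg_left hSbound (norm_nonneg _)
  _ = 1 + prodC u v * T1 + ‖ee u * ee (-v)‖ * ((2 + ‖c‖ * ‖c-1‖ * T2) / ‖c‖) := by ring

open Filter Topology

lemma div_log_tendsto {f : ℕ → ℂ} {A : ℂ} {C : ℝ}
    (h : ∀ n : ℕ, 1 ≤ n → ‖f n - A * ((Real.log n : ℝ):ℂ)‖ ≤ C) :
    Tendsto (fun n : ℕ => f n / ((Real.log n : ℝ):ℂ)) atTop (𝓝 A) := by
  have hlog : Tendsto (fun n : ℕ => Real.log n) atTop atTop :=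
    Real.tendsto_log_atTop.comp tendsto_natCast_atTop_atTop
  have hg : Tendsto (fun n : ℕ => C / Real.log n) atTop (𝓝 0) := by
    have := hlog.inv_tendsto_atTop.const_mul C
    simpa [div_eq_mul_inv] using this
  rw [tendsto_iff_norm_sub_tendsto_zero]
  apply squeeze_zero' ?_ ?_ hg
  · filter_upwards with n using norm_nonneg _
  · filter_upwards [eventually_ge_atTop 2] with n hn
    have hlogpos : 0 < Real.log n := by
      apply Real.log_pos
      exact_mod_cast Nat.lt_of_lt_of_le one_lt_two hn
    have hne : ((Real.log n : ℝ):ℂ) ≠ 0 := by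
      exact_mod_cast Complex.ofReal_ne_zero.2 (ne_of_gt hlogpos)
    have he : f n / ((Real.log n : ℝ):ℂ) - A
        = (f n - A * ((Real.log n : ℝ):ℂ)) / ((Real.log n : ℝ):ℂ) := by
      rw [sub_div, mul_div_assoc, div_self hne, mul_one]
    rw [he, norm_div]
    have hnl : ‖((Real.log n : ℝ):ℂ)‖ = Real.log n := by
      rw [Complex.norm_real, Real.norm_eq_abs, abs_of_pos hlogpos]
    rw [hnl, div_le_div_iff_of_pos_right hlogpos]
    exact h n (by omega)

lemma diag_tendsto (u : ℝ) :
    Tendsto (fun n : ℕ => lubinskyKernel n u u / ((Real.log n : ℝ):ℂ)) atTop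
      (𝓝 ((1/4 + u^2 : ℝ):ℂ)) := by
  obtain ⟨C, hC⟩ := diag_bound u
  exact div_log_tendsto hC

lemma offdiag_tendsto {u v : ℝ} (huv : u ≠ v) :
    Tendsto (fun n : ℕ => lubinskyKernel n u v / ((Real.log n : ℝ):ℂ)) atTop (𝓝 0) := by
  obtain ⟨C, _, hC⟩ := offdiag_bound u v huv
  apply div_log_tendsto (A := 0)
  intro n _
  simpa using hC n

theorem lubinskyKernel_gram_det_asymptotics (l : ℕ) (t : Fin l → ℝ)
    (ht : Function.Injective t) :
    Tendsto
      (fun n : ℕ =>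
        (Matrix.det (Matrix.of fun i j : Fin l => lubinskyKernel n (t i) (t j))) /
          (Real.log n : ℂ) ^ l)
      atTop (𝓝 (∏ j : Fin l, ((1/4 : ℝ) + (t j) ^ 2 : ℝ))) ∧
    ∃ N : ℕ, ∀ n ≥ N,
      IsUnit (Matrix.det (Matrix.of fun i j : Fin l => lubinskyKernel n (t i) (t j))) := by
  set D : Matrix (Fin l) (Fin l) ℂ :=
    Matrix.diagonal (fun j => ((1/4 + (t j)^2 : ℝ):ℂ)) with hD
  set M : ℕ → Matrix (Fin l) (Fin l) ℂ :=
    fun n => Matrix.of fun i j : Fin l =>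
      lubinskyKernel n (t i) (t j) / ((Real.log n : ℝ):ℂ) with hM
  have h1 : Tendsto M atTop (𝓝 D) := by
    refine tendsto_pi_nhds.2 fun i => ?_
    rw [tendsto_pi_nhds]
    intro j
    rcases eq_or_ne i j with rfl | hij
    · have := diag_tendsto (t i)
      simpa [hM, hD, Matrix.diagonal_apply_eq] using this
    · have hne : t i ≠ t j := fun h => hij (ht h)
      have := offdiag_tendsto hne
      simpa [hM, hD, Matrix.diagonal_apply_ne _ hij] using this
  have h2 : Tendsto (fun n => (M n).det) atTop (𝓝 D.det) :=
    ((continuous_id.matrix_det).tendsto D).comp h1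
  have h3 : D.det = ∏ j : Fin l, ((1/4 + (t j)^2 : ℝ):ℂ) := by
    rw [hD, Matrix.det_diagonal]
  have h4 : ∀ n : ℕ,
      (M n).det = (Matrix.det (Matrix.of fun i j : Fin l => lubinskyKernel n (t i) (t j))) /
        (Real.log n : ℂ) ^ l := by
    intro n
    have he : M n = ((Real.log n : ℝ):ℂ)⁻¹ •
        (Matrix.of fun i j : Fin l => lubinskyKernel n (t i) (t j)) := by
      ext i j
      simp [hM, div_eq_inv_mul, Matrix.smul_apply]
    rw [he, Matrix.det_smul]
    simp [Fintype.card_fin, inv_pow, div_eq_inv_mul]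
  constructor
  · have := h2
    rw [h3] at this
    have hfun : (fun n => (M n).det)
        = fun n : ℕ => (Matrix.det (Matrix.of fun i j : Fin l => lubinskyKernel n (t i) (t j))) /
          (Real.log n : ℂ) ^ l := funext h4
    rw [hfun] at this
    convert this using 2
  · have hL : D.det ≠ 0 := by
      rw [h3]
      apply Finset.prod_ne_zero_iff.2
      intro j _
      have : (0:ℝ) < 1/4 + (t j)^2 := by positivity
      exact_mod_cast Complex.ofReal_ne_zero.2 (ne_of_gt this)
    have hev : ∀ᶠ n in atTop, (M n).det ≠ 0 := h2.eventually_ne hL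
    obtain ⟨N, hN⟩ := eventually_atTop.1 hev
    refine ⟨N, fun n hn => ?_⟩
    rw [isUnit_iff_ne_zero]
    intro hdet
    apply hN n hn
    rw [h4 n, hdet, zero_div]
end
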